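/- arXiv:1603.02916 — 12 statements merged into one kernel-verified Lean document; each statement's English description precedes it below -/
import Mathlib

section
/- Let s be a sequence on the neuron set N = {1,...,n} with supp(s) = N, and let P_n be the set of skew-bias matrices of sequences that list each neuron of N exactly once (i.e., sequences of length n that are permutations of (1,2,...,n)). Then B_skew(s) lies in the convex hull of P_n. Concretely, B_skew(s) = (1/∏_{i=1}^n c_i(s)) · Σ_{I} B_skew(s_I), where the sum ranges over all index sets I ⊆ {1,...,ℓ} such that the subsequence s_I contains each neuron of N exactly once (there are exactly ∏_{i=1}^n c_i(s) such sets). -/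
open Finset

namespace NeuralSeq

/-- The bias count `c_{ij}(s)`: number of index pairs `k < k'` with `s_k = i` and `s_{k'} = j`. -/
def biasCount {n : ℕ} : List (Fin n) → Fin n → Fin n → ℕ
  | [], _, _ => 0
  | a :: t, i, j => (if a = i then t.count j else 0) + biasCount t i j

/-- The skew bias `β_{ij}(s)`. -/
noncomputable def skewBias {n : ℕ} (s : List (Fin n)) (i j : Fin n) : ℝ :=
  if 0 < s.count i ∧ 0 < s.count j then
    ((biasCount s i j : ℝ) - (biasCount s j i : ℝ)) / ((s.count i : ℝ) * (s.count j : ℝ))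
  else 0

/-- The skew-bias matrix `B_skew(s)`. -/
noncomputable def Bskew {n : ℕ} (s : List (Fin n)) : Matrix (Fin n) (Fin n) ℝ :=
  Matrix.of fun i j => skewBias s i j

/-- The probability bias `b_{ij}(s)` (meaningful when `i, j ∈ supp(s)`). -/
noncomputable def probBias {n : ℕ} (s : List (Fin n)) (i j : Fin n) : ℝ :=
  (biasCount s i j : ℝ) / ((s.count i : ℝ) * (s.count j : ℝ))

/-- The (unnormalized) center of mass `com_i(s)`, with 1-based indexing. -/
noncomputable def com {n : ℕ} (s : List (Fin n)) (i : Fin n) : ℝ :=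
  if 0 < s.count i then
    (∑ k : Fin s.length, if s.get k = i then ((k : ℕ) + 1 : ℝ) else 0) / (s.count i : ℝ)
  else ((s.length : ℝ) + 1) / 2

/-- The normalized center of mass `γ_i(s)`. -/
noncomputable def gamma {n : ℕ} (s : List (Fin n)) (i : Fin n) : ℝ :=
  (2 * com s i - 1) / (s.length : ℝ) - 1

/-- The firing rate `ρ_i(s)`. -/
noncomputable def rate {n : ℕ} (s : List (Fin n)) (i : Fin n) : ℝ :=
  (s.count i : ℝ) / (s.length : ℝ)

/-- A sequence is pure if for every pair of distinct active neurons, all spikes of one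
precede all spikes of the other (equivalently, `c_{ij}(s) = 0` or `c_{ji}(s) = 0`). -/
def IsPure {n : ℕ} (s : List (Fin n)) : Prop :=
  ∀ i j : Fin n, i ≠ j → 0 < s.count i → 0 < s.count j →
    biasCount s i j = 0 ∨ biasCount s j i = 0

/-- The subsequence `s_I` of `s` given by an index set `I`. -/
def subseqOf {n : ℕ} (s : List (Fin n)) (I : Finset (Fin s.length)) : List (Fin n) :=
  ((List.finRange s.length).filter (fun k => decide (k ∈ I))).map s.get

/-- The shuffling `s^π` of `s` by a permutation `π` of its index set. -/
def shuffle {n : ℕ} (s : List (Fin n)) (π : Equiv.Perm (Fin s.length)) : List (Fin n) :=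
  (List.finRange s.length).map (fun k => s.get (π k))

/-- The order-`m` bias count `c_v(s)`: the number of subsequences of `s` equal to `v`. -/
def orderCount {n : ℕ} : List (Fin n) → List (Fin n) → ℕ
  | _, [] => 1
  | [], _ :: _ => 0
  | a :: t, v :: vs => (if a = v then orderCount t vs else 0) + orderCount t (v :: vs)

end NeuralSeq

section Aux
open NeuralSeq
variable {n : ℕ}

lemma count_map_toFinset (s : List (Fin n)) (v : List (Fin s.length)) (hv : v.Nodup) (i : Fin n) :
    (v.map s.get).count i = ∑ k ∈ v.toFinset, if s.get k = i then 1 else 0 := by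
  induction v with
  | nil => simp
  | cons a v ih =>
    rcases List.nodup_cons.mp hv with ⟨ha, hv'⟩
    rw [List.map_cons, List.count_cons, ih hv', List.toFinset_cons,
      Finset.sum_insert (by simpa using ha)]
    simp [add_comm]

lemma biasCount_map_sorted (s : List (Fin n)) (u : List (Fin s.length))
    (hu : u.Pairwise (· < ·)) (i j : Fin n) :
    biasCount (u.map s.get) i j =
      ∑ k ∈ u.toFinset, ∑ k' ∈ u.toFinset,
        if k < k' ∧ s.get k = i ∧ s.get k' = j then 1 else 0 := by
  induction u with
  | nil => simp [biasCount]
  | cons a v ih =>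
    have hav : ∀ b ∈ v, a < b := (List.pairwise_cons.mp hu).1
    have hv : v.Pairwise (· < ·) := (List.pairwise_cons.mp hu).2
    have hnd : a ∉ v.toFinset := by
      simp only [List.mem_toFinset]
      intro h; exact lt_irrefl a (hav a h)
    rw [List.map_cons]
    show (if s.get a = i then (v.map s.get).count j else 0) + biasCount (v.map s.get) i j = _
    rw [ih hv, List.toFinset_cons, Finset.sum_insert hnd]
    have h1 : (∑ k' ∈ insert a v.toFinset,
        if a < k' ∧ s.get a = i ∧ s.get k' = j then 1 else 0)
        = if s.get a = i then (v.map s.get).count j else 0 := by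
      rw [Finset.sum_insert hnd, if_neg (by simp), zero_add,
        count_map_toFinset s v hv.nodup j]
      by_cases hi : s.get a = i
      · simp only [hi, if_true, true_and]
        refine Finset.sum_congr rfl fun k hk => ?_
        have := hav k (List.mem_toFinset.mp hk)
        simp [this]
      · rw [if_neg hi]
        refine Finset.sum_eq_zero fun k hk => if_neg ?_
        rintro ⟨-, h, -⟩; exact hi h
    have h2 : ∀ k ∈ v.toFinset, (∑ k' ∈ insert a v.toFinset,
        if k < k' ∧ s.get k = i ∧ s.get k' = j then 1 else 0) =
        ∑ k' ∈ v.toFinset, if k < k' ∧ s.get k = i ∧ s.get k' = j then 1 else 0 := by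
      intro k hk
      rw [Finset.sum_insert hnd, if_neg, zero_add]
      have := hav k (List.mem_toFinset.mp hk)
      rintro ⟨hka, -⟩
      exact lt_asymm this hka
    rw [h1, Finset.sum_congr rfl h2]

end Aux

section Aux2
open NeuralSeq
variable {n : ℕ}

lemma count_full (s : List (Fin n)) (i : Fin n) :
    s.count i = ∑ k : Fin s.length, if s.get k = i then 1 else 0 := by
  conv_lhs => rw [← List.map_get_finRange s]
  rw [count_map_toFinset s _ (List.nodup_finRange _) i, List.toFinset_finRange]

lemma bias_full (s : List (Fin n)) (i j : Fin n) :
    biasCount s i j = ∑ k : Fin s.length, ∑ k' : Fin s.length,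
      if k < k' ∧ s.get k = i ∧ s.get k' = j then 1 else 0 := by
  conv_lhs => rw [← List.map_get_finRange s]
  rw [biasCount_map_sorted s _ (List.pairwise_lt_finRange _) i j, List.toFinset_finRange]

variable (s : List (Fin n)) (I : Finset (Fin s.length))

lemma sorted_filterRange :
    ((List.finRange s.length).filter (fun k => decide (k ∈ I))).Pairwise (· < ·) :=
  (List.pairwise_lt_finRange _).sublist List.filter_sublist

lemma toFinset_filterRange :
    ((List.finRange s.length).filter (fun k => decide (k ∈ I))).toFinset = I := by
  ext k; simp [List.mem_filter]

lemma count_subseq (i : Fin n) :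
    (subseqOf s I).count i = ∑ k ∈ I, if s.get k = i then 1 else 0 := by
  rw [subseqOf, count_map_toFinset s _ (sorted_filterRange s I).nodup i, toFinset_filterRange]

lemma bias_subseq (i j : Fin n) :
    biasCount (subseqOf s I) i j = ∑ k ∈ I, ∑ k' ∈ I,
      if k < k' ∧ s.get k = i ∧ s.get k' = j then 1 else 0 := by
  rw [subseqOf, biasCount_map_sorted s _ (sorted_filterRange s I) i j, toFinset_filterRange]

end Aux2

section Bij
open NeuralSeq
variable {n : ℕ} (s : List (Fin n))

/-- The index set chosen by a choice function picking one occurrence of each neuron. -/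
def choiceSet (f : ∀ i : Fin n, {k : Fin s.length // s.get k = i}) : Finset (Fin s.length) :=
  Finset.univ.image fun i => (f i).1

lemma filter_choiceSet (f : ∀ i : Fin n, {k : Fin s.length // s.get k = i}) (i : Fin n) :
    (choiceSet s f).filter (fun k => s.get k = i) = {(f i).1} := by
  ext k
  simp only [choiceSet, Finset.mem_filter, Finset.mem_image, Finset.mem_univ, true_and,
    Finset.mem_singleton]
  constructor
  · rintro ⟨⟨i', rfl⟩, hk⟩
    have : i' = i := by rw [← hk, (f i').2]
    subst this; rfl
  · rintro rfl
    exact ⟨⟨i, rfl⟩, (f i).2⟩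

lemma count_subseq_choiceSet (f : ∀ i : Fin n, {k : Fin s.length // s.get k = i}) (i : Fin n) :
    (subseqOf s (choiceSet s f)).count i = 1 := by
  rw [count_subseq, ← Finset.card_filter, filter_choiceSet, Finset.card_singleton]

lemma choiceSet_injective : Function.Injective (choiceSet s) := by
  intro f g h
  funext i
  have h1 : (f i).1 ∈ choiceSet s g := h ▸ Finset.mem_image_of_mem _ (Finset.mem_univ i)
  rcases Finset.mem_image.mp h1 with ⟨i', -, hi'⟩
  have hii : i' = i := by rw [← (f i).2, ← hi', (g i').2]
  apply Subtype.ext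
  rw [← hi', hii]

lemma choiceSet_surj (I : Finset (Fin s.length)) (hI : ∀ i : Fin n, (subseqOf s I).count i = 1) :
    ∃ f, choiceSet s f = I := by
  have h1 : ∀ i : Fin n, ∃ a, I.filter (fun k => s.get k = i) = {a} := by
    intro i
    refine Finset.card_eq_one.mp ?_
    rw [Finset.card_filter, ← count_subseq, hI i]
  choose a ha using h1
  have hmem : ∀ i, a i ∈ I ∧ s.get (a i) = i := by
    intro i
    have : a i ∈ I.filter (fun k => s.get k = i) := by
      rw [ha i]; exact Finset.mem_singleton_self _
    exact Finset.mem_filter.mp this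
  refine ⟨fun i => ⟨a i, (hmem i).2⟩, ?_⟩
  ext k
  simp only [choiceSet, Finset.mem_image, Finset.mem_univ, true_and]
  constructor
  · rintro ⟨i, rfl⟩; exact (hmem i).1
  · intro hk
    refine ⟨s.get k, ?_⟩
    have h2 : k ∈ I.filter (fun k' => s.get k' = s.get k) := Finset.mem_filter.mpr ⟨hk, rfl⟩
    rw [ha (s.get k)] at h2
    exact (Finset.mem_singleton.mp h2).symm

lemma card_choice (i : Fin n) :
    Fintype.card {k : Fin s.length // s.get k = i} = s.count i := by
  rw [Fintype.card_subtype, Finset.card_filter, count_full]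

lemma card_S : (Finset.univ.filter (fun I : Finset (Fin s.length) =>
      ∀ i : Fin n, (subseqOf s I).count i = 1)).card = ∏ i : Fin n, s.count i := by
  classical
  have h : (Finset.univ : Finset (∀ i : Fin n, {k : Fin s.length // s.get k = i})).card
      = (Finset.univ.filter (fun I : Finset (Fin s.length) =>
      ∀ i : Fin n, (subseqOf s I).count i = 1)).card := by
    refine Finset.card_bij (fun f _ => choiceSet s f) ?_ ?_ ?_
    · intro f _; exact Finset.mem_filter.mpr ⟨Finset.mem_univ _, count_subseq_choiceSet s f⟩
    · intro f _ g _ h; exact choiceSet_injective s h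
    · intro I hI
      rcases choiceSet_surj s I (Finset.mem_filter.mp hI).2 with ⟨f, hf⟩
      exact ⟨f, Finset.mem_univ _, hf⟩
  rw [← h, Finset.card_univ, Fintype.card_pi]
  exact Finset.prod_congr rfl fun i _ => card_choice s i

end Bij

section Core
open NeuralSeq
variable {n : ℕ}

lemma ite_shuffle (A B C : Prop) [Decidable A] [Decidable B] [Decidable C] :
    (if A ∧ B ∧ C then (1:ℕ) else 0)
      = if B then (if C then (if A then 1 else 0) else 0) else 0 := by
  split_ifs <;> tauto

lemma sum_subtype_univ {α M : Type*} [Fintype α] [AddCommMonoid M] (p : α → Prop)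
    [DecidablePred p] (F : α → M) :
    ∑ a : Subtype p, F a.1 = ∑ x ∈ Finset.univ.filter p, F x := by
  rw [← Finset.sum_subtype_eq_sum_filter, Finset.subtype_univ]

lemma subtype_pair_sum (s : List (Fin n)) (i j : Fin n) :
    ∑ a : {k : Fin s.length // s.get k = i}, ∑ b : {k : Fin s.length // s.get k = j},
      (if (a : Fin s.length) < (b : Fin s.length) then (1:ℕ) else 0) = biasCount s i j := by
  rw [bias_full]
  rw [sum_subtype_univ (fun k => s.get k = i)
    (fun k => ∑ b : {k' : Fin s.length // s.get k' = j}, if k < b.1 then (1:ℕ) else 0),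
    Finset.sum_filter]
  refine Finset.sum_congr rfl fun k _ => ?_
  by_cases hk : s.get k = i
  · rw [if_pos hk, sum_subtype_univ (fun k' => s.get k' = j)
      (fun k' => if k < k' then (1:ℕ) else 0), Finset.sum_filter]
    refine Finset.sum_congr rfl fun k' _ => ?_
    split_ifs <;> tauto
  · rw [if_neg hk]
    exact (Finset.sum_eq_zero fun k' _ => by
      rw [if_neg]; rintro ⟨-, h, -⟩; exact hk h).symm

lemma bias_choice (s : List (Fin n)) (f : ∀ m : Fin n, {k : Fin s.length // s.get k = m})
    (i j : Fin n) :
    biasCount (subseqOf s (choiceSet s f)) i j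
      = if ((f i : Fin s.length)) < (f j : Fin s.length) then 1 else 0 := by
  have hinj : ∀ x ∈ (Finset.univ : Finset (Fin n)), ∀ y ∈ Finset.univ,
      (f x : Fin s.length) = (f y : Fin s.length) → x = y := by
    intro x _ y _ h
    rw [← (f x).2, h, (f y).2]
  have hget : ∀ m : Fin n, s.get (f m : Fin s.length) = m := fun m => (f m).2
  rw [bias_subseq, choiceSet, Finset.sum_image hinj]
  have hin : ∀ i' : Fin n, (∑ k' ∈ Finset.univ.image (fun m => ((f m : Fin s.length))),
      if (f i' : Fin s.length) < k' ∧ s.get (f i' : Fin s.length) = i ∧ s.get k' = j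
        then (1:ℕ) else 0)
      = ∑ j' : Fin n, if (f i' : Fin s.length) < (f j' : Fin s.length)
          ∧ s.get (f i' : Fin s.length) = i ∧ s.get (f j' : Fin s.length) = j
          then (1:ℕ) else 0 := fun i' => Finset.sum_image hinj
  rw [Finset.sum_congr rfl fun i' _ => hin i']
  simp_rw [hget, ite_shuffle, Finset.sum_ite_irrel, Finset.sum_const_zero]
  rw [Finset.sum_ite_eq' Finset.univ i, if_pos (Finset.mem_univ i),
    Finset.sum_ite_eq' Finset.univ j, if_pos (Finset.mem_univ j)]

lemma skew_choice (s : List (Fin n)) (f : ∀ m : Fin n, {k : Fin s.length // s.get k = m})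
    (i j : Fin n) :
    skewBias (subseqOf s (choiceSet s f)) i j
      = (if ((f i : Fin s.length)) < (f j : Fin s.length) then (1:ℝ) else 0)
        - (if ((f j : Fin s.length)) < (f i : Fin s.length) then (1:ℝ) else 0) := by
  have hci := count_subseq_choiceSet s f i
  have hcj := count_subseq_choiceSet s f j
  rw [skewBias, if_pos ⟨by omega, by omega⟩, hci, hcj, bias_choice, bias_choice]
  push_cast [apply_ite (Nat.cast : ℕ → ℝ)]
  norm_num

end Core

section Key
open NeuralSeq
variable {n : ℕ}

lemma key_entry (s : List (Fin n)) (hsupp : ∀ i : Fin n, 0 < s.count i) (i j : Fin n) :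
    (∏ m : Fin n, (s.count m : ℝ)) * skewBias s i j
      = ∑ I ∈ Finset.univ.filter (fun I : Finset (Fin s.length) =>
          ∀ m : Fin n, (subseqOf s I).count m = 1), skewBias (subseqOf s I) i j := by
  classical
  have hS : (∑ I ∈ Finset.univ.filter (fun I : Finset (Fin s.length) =>
      ∀ m : Fin n, (subseqOf s I).count m = 1), skewBias (subseqOf s I) i j)
      = ∑ f : (∀ m : Fin n, {k : Fin s.length // s.get k = m}),
          ((if ((f i : Fin s.length)) < (f j : Fin s.length) then (1:ℝ) else 0)
            - (if ((f j : Fin s.length)) < (f i : Fin s.length) then (1:ℝ) else 0)) := by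
    refine (Finset.sum_bij (fun f _ => choiceSet s f) ?_ ?_ ?_ ?_).symm
    · intro f _
      exact Finset.mem_filter.mpr ⟨Finset.mem_univ _, count_subseq_choiceSet s f⟩
    · intro f _ g _ h; exact choiceSet_injective s h
    · intro I hI
      rcases choiceSet_surj s I (Finset.mem_filter.mp hI).2 with ⟨f, hf⟩
      exact ⟨f, Finset.mem_univ _, hf⟩
    · intro f _; exact (skew_choice s f i j).symm
  rw [hS]
  by_cases hij : i = j
  · subst hij
    rw [show skewBias s i i = 0 from by simp [skewBias], mul_zero]
    exact (Finset.sum_eq_zero fun f _ => sub_self _).symm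
  · have hji : j ≠ i := Ne.symm hij
    let R := ∀ m : {m₁ : {m : Fin n // m ≠ i} // m₁ ≠ ⟨j, hji⟩},
      {k : Fin s.length // s.get k = m.1.1}
    let e : (∀ m : Fin n, {k : Fin s.length // s.get k = m}) ≃
        {k : Fin s.length // s.get k = i} × ({k : Fin s.length // s.get k = j} × R) :=
      (Equiv.piSplitAt i fun m => {k : Fin s.length // s.get k = m}).trans
        (Equiv.prodCongr (Equiv.refl _)
          (Equiv.piSplitAt (⟨j, hji⟩ : {m : Fin n // m ≠ i})
            (fun m => {k : Fin s.length // s.get k = m.1})))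
    have hfact : (∑ f : (∀ m : Fin n, {k : Fin s.length // s.get k = m}),
        ((if ((f i : Fin s.length)) < (f j : Fin s.length) then (1:ℝ) else 0)
          - (if ((f j : Fin s.length)) < (f i : Fin s.length) then (1:ℝ) else 0)))
        = ∑ p : {k : Fin s.length // s.get k = i} × ({k : Fin s.length // s.get k = j} × R),
          ((if ((p.1 : Fin s.length)) < (p.2.1 : Fin s.length) then (1:ℝ) else 0)
            - (if ((p.2.1 : Fin s.length)) < (p.1 : Fin s.length) then (1:ℝ) else 0)) :=
      Fintype.sum_equiv e _ _ (fun f => rfl)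
    rw [hfact, Fintype.sum_prod_type]
    dsimp only
    simp_rw [Fintype.sum_prod_type]
    dsimp +instances only
    simp_rw [Finset.sum_const, Finset.card_univ, nsmul_eq_mul]
    simp_rw [← Finset.mul_sum]
    have hsum1 : (∑ a : {k : Fin s.length // s.get k = i},
        ∑ b : {k : Fin s.length // s.get k = j},
          (if (a : Fin s.length) < (b : Fin s.length) then (1:ℝ) else 0))
        = (biasCount s i j : ℝ) := by
      rw [← subtype_pair_sum s i j]; push_cast; rfl
    have hsum2 : (∑ a : {k : Fin s.length // s.get k = i},
        ∑ b : {k : Fin s.length // s.get k = j},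
          (if (b : Fin s.length) < (a : Fin s.length) then (1:ℝ) else 0))
        = (biasCount s j i : ℝ) := by
      rw [Finset.sum_comm, ← subtype_pair_sum s j i]; push_cast; rfl
    have hsplit : (∑ a : {k : Fin s.length // s.get k = i},
        ∑ b : {k : Fin s.length // s.get k = j},
          ((if (a : Fin s.length) < (b : Fin s.length) then (1:ℝ) else 0)
            - (if (b : Fin s.length) < (a : Fin s.length) then (1:ℝ) else 0)))
        = (biasCount s i j : ℝ) - (biasCount s j i : ℝ) := by
      rw [← hsum1, ← hsum2, ← Finset.sum_sub_distrib]
      exact Finset.sum_congr rfl fun a _ => Finset.sum_sub_distrib _ _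
    rw [hsplit]
    have hcard : (∏ m : Fin n, s.count m) = s.count i * (s.count j * Fintype.card R) := by
      have h1 : ∏ m : Fin n, s.count m
          = Fintype.card (∀ m : Fin n, {k : Fin s.length // s.get k = m}) := by
        rw [Fintype.card_pi]
        exact (Finset.prod_congr rfl fun m _ => (card_choice s m).symm)
      rw [h1, Fintype.card_congr e, Fintype.card_prod, Fintype.card_prod,
        card_choice, card_choice]
    have hprod : (∏ m : Fin n, (s.count m : ℝ))
        = (s.count i : ℝ) * ((s.count j : ℝ) * (Fintype.card R : ℝ)) := by
      exact_mod_cast congrArg (Nat.cast : ℕ → ℝ) hcard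
    have hci : (0:ℝ) < (s.count i : ℝ) := by exact_mod_cast hsupp i
    have hcj : (0:ℝ) < (s.count j : ℝ) := by exact_mod_cast hsupp j
    rw [skewBias, if_pos ⟨hsupp i, hsupp j⟩, hprod]
    field_simp

end Key


open NeuralSeq in
/-- every full-support sequence's skew-bias matrix lies in the convex hull of
the skew-bias matrices of one-spike-per-neuron sequences; concretely it is the average of
the skew-bias matrices of the `∏ c_i(s)` subsequences containing each neuron exactly once. -/
theorem bias_in_fundamental_polytope {n : ℕ} (s : List (Fin n))
    (hsupp : ∀ i : Fin n, 0 < s.count i) :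
    Bskew s ∈ convexHull ℝ {M : Matrix (Fin n) (Fin n) ℝ |
        ∃ t : List (Fin n), (∀ i : Fin n, t.count i = 1) ∧ M = Bskew t} ∧
    (Finset.univ.filter (fun I : Finset (Fin s.length) =>
        ∀ i : Fin n, (subseqOf s I).count i = 1)).card = ∏ i : Fin n, s.count i ∧
    Bskew s = (∏ i : Fin n, (s.count i : ℝ))⁻¹ •
      ∑ I ∈ Finset.univ.filter (fun I : Finset (Fin s.length) =>
        ∀ i : Fin n, (subseqOf s I).count i = 1), Bskew (subseqOf s I) := by
  
  classical
  have hcard := card_S s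
  have hprodpos : 0 < ∏ i : Fin n, s.count i := Finset.prod_pos fun i _ => hsupp i
  have hprodR : (0:ℝ) < ∏ i : Fin n, (s.count i : ℝ) := by
    rw [← Nat.cast_prod]; exact_mod_cast hprodpos
  have heq : Bskew s = (∏ i : Fin n, (s.count i : ℝ))⁻¹ •
      ∑ I ∈ Finset.univ.filter (fun I : Finset (Fin s.length) =>
        ∀ i : Fin n, (subseqOf s I).count i = 1), Bskew (subseqOf s I) := by
    ext i j
    rw [Matrix.smul_apply, Matrix.sum_apply]
    show skewBias s i j = _
    have h1 : ∀ I : Finset (Fin s.length), Bskew (subseqOf s I) i j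
        = skewBias (subseqOf s I) i j := fun I => rfl
    simp_rw [h1]
    rw [← key_entry s hsupp i j, smul_eq_mul, inv_mul_cancel_left₀ hprodR.ne']
  refine ⟨?_, hcard, heq⟩
  have hsum1 : (∑ _I ∈ Finset.univ.filter (fun I : Finset (Fin s.length) =>
      ∀ i : Fin n, (subseqOf s I).count i = 1), (1:ℝ)) = ∏ i : Fin n, (s.count i : ℝ) := by
    rw [Finset.sum_const, nsmul_eq_mul, mul_one, hcard]
    push_cast
    rfl
  have hz : ∀ I ∈ Finset.univ.filter (fun I : Finset (Fin s.length) =>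
      ∀ i : Fin n, (subseqOf s I).count i = 1),
      Bskew (subseqOf s I) ∈ {M : Matrix (Fin n) (Fin n) ℝ |
        ∃ t : List (Fin n), (∀ i : Fin n, t.count i = 1) ∧ M = Bskew t} :=
    fun I hI => ⟨subseqOf s I, (Finset.mem_filter.mp hI).2, rfl⟩
  have h := Finset.centerMass_mem_convexHull
    (Finset.univ.filter (fun I : Finset (Fin s.length) =>
      ∀ i : Fin n, (subseqOf s I).count i = 1))
    (w := fun _ => (1:ℝ)) (z := fun I => Bskew (subseqOf s I))
    (fun _ _ => zero_le_one) (by rw [hsum1]; exact hprodR) hz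
  have hcm : (Finset.univ.filter (fun I : Finset (Fin s.length) =>
      ∀ i : Fin n, (subseqOf s I).count i = 1)).centerMass (fun _ => (1:ℝ))
      (fun I => Bskew (subseqOf s I))
      = (∏ i : Fin n, (s.count i : ℝ))⁻¹ •
        ∑ I ∈ Finset.univ.filter (fun I : Finset (Fin s.length) =>
          ∀ i : Fin n, (subseqOf s I).count i = 1), Bskew (subseqOf s I) := by
    rw [Finset.centerMass]
    simp_rw [one_smul]
    rw [hsum1]
  rw [heq, ← hcm]
  exact h
end

section
/- For every n ≥ 1 and every matrix A ∈ {-1,0,1}^{n×n} with A_{ii} = 0 for all i and A_{ji} = -A_{ij} for all i, j (i.e., A is the adjacency matrix of a simple digraph encoded skew-symmetrically), there exists a sequence s on the neuron set N = {1,...,n} with supp(s) = N such that sign(β_{ij}(s)) = A_{ij} for all i, j ∈ N. -/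
open Finset

section Aux
open NeuralSeq

namespace BiasAux

variable {n : ℕ}

lemma biasCount_append (x y : List (Fin n)) (i j : Fin n) :
    biasCount (x ++ y) i j = biasCount x i j + x.count i * y.count j + biasCount y i j := by
  induction x with
  | nil => simp [biasCount]
  | cons a t ih =>
    show (if a = i then (t ++ y).count j else 0) + biasCount (t ++ y) i j = _
    rw [ih]
    by_cases h : a = i
    · subst h
      simp only [if_pos rfl, biasCount, List.count_append, List.count_cons,
        beq_self_eq_true, if_true]
      ring
    · have hb : ¬ ((a == i) = true) := by simpa using h
      simp only [if_neg h, biasCount, List.count_cons, if_neg hb]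
      ring

lemma biasCount_singleton (a i j : Fin n) : biasCount [a] i j = 0 := by
  simp [biasCount]

lemma biasCount_reverse (s : List (Fin n)) (i j : Fin n) :
    biasCount s.reverse i j = biasCount s j i := by
  induction s with
  | nil => rfl
  | cons a t ih =>
    rw [List.reverse_cons, biasCount_append, ih, biasCount_singleton]
    simp only [biasCount, List.count_reverse, List.count_singleton']
    by_cases h : a = j <;> simp [h] <;> ring

/-- The skew difference `c_{kl} - c_{lk}` as an integer. -/
def Dz (s : List (Fin n)) (k l : Fin n) : ℤ :=
  (biasCount s k l : ℤ) - (biasCount s l k : ℤ)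

lemma Dz_append (x y : List (Fin n)) (k l : Fin n) :
    Dz (x ++ y) k l = Dz x k l + Dz y k l
      + ((x.count k : ℤ) * y.count l - (x.count l : ℤ) * y.count k) := by
  simp only [Dz, biasCount_append]; push_cast; ring

lemma Dz_reverse (s : List (Fin n)) (k l : Fin n) :
    Dz s.reverse k l = - Dz s k l := by
  simp only [Dz, biasCount_reverse]; ring

lemma count_one_of_nodup_mem {α : Type*} [BEq α] [LawfulBEq α] {l : List α} {a : α}
    (h : l.Nodup) (hm : a ∈ l) : l.count a = 1 := by
  induction l with
  | nil => cases hm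
  | cons b t ih =>
    rw [List.count_cons]
    rcases List.mem_cons.mp hm with rfl | hmt
    · have hz : t.count a = 0 := List.count_eq_zero.mpr (List.nodup_cons.mp h).1
      simp [hz]
    · have hb : ¬ ((b == a) = true) := by
        intro hba
        have : b = a := by simpa using hba
        exact (List.nodup_cons.mp h).1 (this ▸ hmt)
      rw [ih (List.nodup_cons.mp h).2 hmt, if_neg hb]

/-- The remaining neurons, each once. -/
def passR (i j : Fin n) : List (Fin n) :=
  (List.finRange n).filter (fun k => !(k = i || k = j))

lemma passR_count (i j k : Fin n) :
    (passR i j).count k = if k = i ∨ k = j then 0 else 1 := by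
  by_cases h : k = i ∨ k = j
  · rw [if_pos h, List.count_eq_zero]
    intro hm
    rw [passR, List.mem_filter] at hm
    simp only [Bool.not_eq_true', Bool.or_eq_false_iff, decide_eq_false_iff_not] at hm
    tauto
  · rw [if_neg h, passR, List.count_filter]
    · exact List.count_eq_one_of_mem (List.nodup_finRange n) (List.mem_finRange k)
    · push_neg at h; simp [h.1, h.2]

/-- The gadget block for a directed edge `(i,j)`. -/
def blk (i j : Fin n) : List (Fin n) :=
  ([i, j] ++ passR i j) ++ ((passR i j).reverse ++ [i, j])

lemma pair_count (i j k : Fin n) (hij : i ≠ j) :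
    ([i, j] : List (Fin n)).count k = if k = i ∨ k = j then 1 else 0 := by
  simp only [List.count_cons, List.count_nil]
  rcases eq_or_ne k i with h | h
  · subst h; simp [hij.symm, Ne.symm]
  · rcases eq_or_ne k j with h2 | h2
    · subst h2; simp [Ne.symm h]
    · simp [h, h2, Ne.symm h, Ne.symm h2]

lemma blk_count (i j k : Fin n) (hij : i ≠ j) : (blk i j).count k = 2 := by
  simp only [blk, List.count_append, List.count_reverse, passR_count, pair_count i j k hij]
  by_cases h : k = i ∨ k = j <;> simp [h]

lemma Dz_pair (i j k l : Fin n) (hij : i ≠ j) :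
    Dz ([i, j] : List (Fin n)) k l
      = (if k = i ∧ l = j then 1 else 0) - (if l = i ∧ k = j then 1 else 0) := by
  have hb : ∀ a b : Fin n, biasCount ([i, j] : List (Fin n)) a b
      = if a = i ∧ b = j then 1 else 0 := by
    intro a b
    by_cases h1 : a = i <;> by_cases h2 : b = j <;>
      simp [biasCount, List.count_singleton', h1, h2, Ne.symm hij,
        (show ∀ x y : Fin n, ¬ x = y → ¬ y = x from fun x y hxy hyx => hxy hyx.symm)]
  simp only [Dz, hb]
  by_cases h1 : k = i ∧ l = j <;> by_cases h2 : l = i ∧ k = j <;> simp [h1, h2]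

lemma Dz_blk (i j k l : Fin n) (hij : i ≠ j) :
    Dz (blk i j) k l = 2 * Dz ([i, j] : List (Fin n)) k l := by
  simp only [blk, Dz_append, Dz_reverse, List.count_append, List.count_reverse]
  push_cast
  ring

/-- Concatenation of gadget blocks for a list of edges. -/
def blocks : List (Fin n × Fin n) → List (Fin n)
  | [] => []
  | p :: ps => blk p.1 p.2 ++ blocks ps

lemma blocks_count (es : List (Fin n × Fin n)) (h : ∀ p ∈ es, p.1 ≠ p.2) (k : Fin n) :
    (blocks es).count k = 2 * es.length := by
  induction es with
  | nil => simp [blocks]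
  | cons p ps ih =>
    have h1 : p.1 ≠ p.2 := h p List.mem_cons_self
    have h2 : ∀ q ∈ ps, q.1 ≠ q.2 := fun q hq => h q (List.mem_cons_of_mem p hq)
    simp only [blocks, List.count_append, blk_count p.1 p.2 k h1, ih h2, List.length_cons]
    ring

lemma Dz_blocks (es : List (Fin n × Fin n)) (h : ∀ p ∈ es, p.1 ≠ p.2) (k l : Fin n) :
    Dz (blocks es) k l = 2 * ((es.count (k, l) : ℤ) - (es.count (l, k) : ℤ)) := by
  induction es with
  | nil => simp [blocks, Dz, biasCount]
  | cons p ps ih =>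
    have h1 : p.1 ≠ p.2 := h p List.mem_cons_self
    have h2 : ∀ q ∈ ps, q.1 ≠ q.2 := fun q hq => h q (List.mem_cons_of_mem p hq)
    have hcnt : ∀ m : Fin n, ((blk p.1 p.2).count m : ℤ) = 2 := by
      intro m; rw [blk_count p.1 p.2 m h1]; norm_num
    have hcnt2 : ∀ m : Fin n, ((blocks ps).count m : ℤ) = 2 * ps.length := by
      intro m; rw [blocks_count ps h2 m]; push_cast; ring
    show Dz (blk p.1 p.2 ++ blocks ps) k l = _
    rw [Dz_append, ih h2, Dz_blk p.1 p.2 k l h1, Dz_pair p.1 p.2 k l h1,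
      hcnt k, hcnt l, hcnt2 k, hcnt2 l]
    have key : ∀ a b : Fin n, (((p :: ps).count (a, b) : ℕ) : ℤ)
        = (ps.count (a, b) : ℤ) + (if a = p.1 ∧ b = p.2 then 1 else 0) := by
      intro a b
      rw [List.count_cons]
      by_cases hh : a = p.1 ∧ b = p.2
      · have hpe : p = (a, b) := by
          obtain ⟨h1', h2'⟩ := hh
          exact Prod.ext h1'.symm h2'.symm
        rw [if_pos hh, if_pos (by simp [hpe])]
        push_cast; ring
      · have hpe : ¬ ((p == (a, b)) = true) := by
          intro he
          apply hh
          have : p = (a, b) := by simpa using he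
          rw [this]
          exact ⟨rfl, rfl⟩
        rw [if_neg hh, if_neg hpe]
        push_cast; ring
    have e1 := key k l
    have e2 := key l k
    rw [e1, e2]
    ring

end BiasAux
end Aux

open NeuralSeq in
/-- every simple digraph (encoded as a skew-symmetric `{-1,0,1}`-matrix)
is realizable as the bias network of some full-support sequence. -/
theorem every_bias_network_possible {n : ℕ} (hn : 1 ≤ n)
    (A : Matrix (Fin n) (Fin n) ℝ)
    (hval : ∀ i j : Fin n, A i j = -1 ∨ A i j = 0 ∨ A i j = 1)
    (hdiag : ∀ i : Fin n, A i i = 0)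
    (hskew : ∀ i j : Fin n, A j i = -A i j) :
    ∃ s : List (Fin n), (∀ i : Fin n, 0 < s.count i) ∧
      ∀ i j : Fin n, Real.sign (skewBias s i j) = A i j := by
  classical
  open BiasAux in
  obtain ⟨E, hEcnt, hEne⟩ :
      ∃ E : List (Fin n × Fin n),
        (∀ k l : Fin n, (E.count (k, l) : ℤ) = if A k l = 1 then 1 else 0) ∧
        (∀ p ∈ E, p.1 ≠ p.2) := by
    refine ⟨(Finset.univ.filter (fun p : Fin n × Fin n => A p.1 p.2 = 1)).toList, ?_, ?_⟩
    · intro k l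
      by_cases h : A k l = 1
      · have hm : (k, l) ∈ (Finset.univ.filter
            (fun p : Fin n × Fin n => A p.1 p.2 = 1)).toList := by
          rw [Finset.mem_toList, Finset.mem_filter]
          exact ⟨Finset.mem_univ _, h⟩
        rw [if_pos h, BiasAux.count_one_of_nodup_mem (Finset.nodup_toList _) hm]
        norm_num
      · have hm : (k, l) ∉ (Finset.univ.filter
            (fun p : Fin n × Fin n => A p.1 p.2 = 1)).toList := by
          rw [Finset.mem_toList, Finset.mem_filter]
          intro hc; exact h hc.2
        rw [if_neg h, List.count_eq_zero.mpr hm]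
        norm_num
    · intro p hp
      rw [Finset.mem_toList, Finset.mem_filter] at hp
      intro he
      rw [he, hdiag] at hp
      exact one_ne_zero hp.2.symm
  set L : List (Fin n) := List.finRange n with hL
  set s : List (Fin n) := (L ++ L.reverse) ++ BiasAux.blocks E with hs
  have hLc : ∀ m : Fin n, L.count m = 1 := fun m =>
    BiasAux.count_one_of_nodup_mem (List.nodup_finRange n) (List.mem_finRange m)
  have hcount : ∀ m : Fin n, s.count m = 2 + 2 * E.length := by
    intro m
    rw [hs, List.count_append, List.count_append, List.count_reverse, hLc m,
      BiasAux.blocks_count E hEne m]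
  have hpos : ∀ m : Fin n, 0 < s.count m := by
    intro m; rw [hcount m]; omega
  refine ⟨s, hpos, ?_⟩
  intro i j
  have hDz : BiasAux.Dz s i j = 2 * ((if A i j = 1 then (1 : ℤ) else 0)
      - (if A j i = 1 then (1 : ℤ) else 0)) := by
    rw [hs, BiasAux.Dz_append, BiasAux.Dz_append, BiasAux.Dz_reverse,
      BiasAux.Dz_blocks E hEne i j, hEcnt i j, hEcnt j i]
    simp only [List.count_append, List.count_reverse, hLc,
      BiasAux.blocks_count E hEne]
    push_cast
    ring
  have hsb : skewBias s i j = (BiasAux.Dz s i j : ℝ) / ((s.count i : ℝ) * (s.count j : ℝ)) := by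
    rw [skewBias, if_pos ⟨hpos i, hpos j⟩, BiasAux.Dz]
    push_cast
    ring_nf
  have hden : (0 : ℝ) < (s.count i : ℝ) * (s.count j : ℝ) := by
    have := hpos i; have := hpos j
    positivity
  rcases hval i j with h | h | h
  · -- A i j = -1, hence A j i = 1
    have hji : A j i = 1 := by rw [hskew, h]; norm_num
    have h1 : A i j ≠ 1 := by rw [h]; norm_num
    have hD : BiasAux.Dz s i j = -2 := by rw [hDz, if_neg h1, if_pos hji]; ring
    have : skewBias s i j < 0 := by
      rw [hsb, hD]
      apply div_neg_of_neg_of_pos _ hden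
      norm_num
    rw [Real.sign_of_neg this, h]
  · -- A i j = 0, hence A j i = 0
    have hji : A j i = 0 := by rw [hskew, h]; norm_num
    have h1 : A i j ≠ 1 := by rw [h]; norm_num
    have h2 : A j i ≠ 1 := by rw [hji]; norm_num
    have hD : BiasAux.Dz s i j = 0 := by rw [hDz, if_neg h1, if_neg h2]; ring
    have : skewBias s i j = 0 := by rw [hsb, hD]; norm_num
    rw [this, Real.sign_zero, h]
  · -- A i j = 1, hence A j i = -1
    have hji : A j i ≠ 1 := by
      rw [hskew, h]; norm_num
    have hD : BiasAux.Dz s i j = 2 := by rw [hDz, if_pos h, if_neg hji]; ring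
    have : 0 < skewBias s i j := by
      rw [hsb, hD]
      apply div_pos _ hden
      norm_num
    rw [Real.sign_of_pos this, h]
end

section
/- For every sequence s on the neuron set N = {1,...,n} of length ℓ ≥ 1 and every neuron i ∈ N, γ_i(s) = Σ_{j=1}^n β_{ji}(s)·ρ_j(s); that is, the normalized center-of-mass vector γ(s) equals B_skew(s)^T applied to the firing-rate vector ρ(s). -/
open Finset

namespace NeuralSeq

@[simp] lemma get_cons_succ'' {n : ℕ} (a : Fin n) (t : List (Fin n)) (k : Fin t.length) :
    (a :: t).get k.succ = t.get k := rfl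

@[simp] lemma get_cons_zero'' {n : ℕ} (a : Fin n) (t : List (Fin n)) :
    (a :: t).get (0 : Fin (t.length + 1)) = a := rfl

/-- 0-based position sum of neuron `i`. -/
def posSum {n : ℕ} (s : List (Fin n)) (i : Fin n) : ℕ :=
  ∑ k : Fin s.length, if s.get k = i then (k : ℕ) else 0

lemma count_eq_sum {n : ℕ} (s : List (Fin n)) (i : Fin n) :
    s.count i = ∑ k : Fin s.length, if s.get k = i then 1 else 0 := by
  induction s with
  | nil => simp
  | cons a t ih =>
    simp only [List.length_cons]
    rw [Fin.sum_univ_succ]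
    simp only [List.count_cons, get_cons_succ'', get_cons_zero'']
    rw [← ih]
    simp only [beq_iff_eq]
    rcases eq_or_ne a i with h | h
    · subst h; simp [Nat.add_comm]
    · simp [h, h.symm, Nat.add_comm]

lemma posSum_cons {n : ℕ} (a : Fin n) (t : List (Fin n)) (i : Fin n) :
    posSum (a :: t) i = posSum t i + t.count i := by
  unfold posSum
  simp only [List.length_cons]
  rw [Fin.sum_univ_succ]
  simp only [get_cons_succ'', Fin.val_succ, get_cons_zero'', Fin.val_zero, ite_self, zero_add]
  rw [count_eq_sum, ← Finset.sum_add_distrib]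
  refine Eq.trans (congrArg (· + _) (ite_self (0 : ℕ))) ?_
  rw [zero_add]
  exact Finset.sum_congr rfl fun k _ => by split <;> simp

lemma sum_biasCount_left {n : ℕ} (s : List (Fin n)) (i : Fin n) :
    ∑ j : Fin n, biasCount s j i = posSum s i := by
  induction s with
  | nil => simp [posSum, biasCount]
  | cons a t ih =>
    simp only [biasCount]
    rw [Finset.sum_add_distrib, ih, posSum_cons]
    rw [Finset.sum_ite_eq]
    simp [Nat.add_comm]

lemma sum_count {n : ℕ} (s : List (Fin n)) :
    ∑ j : Fin n, s.count j = s.length := by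
  induction s with
  | nil => simp
  | cons a t ih =>
    simp only [List.count_cons, List.length_cons]
    rw [Finset.sum_add_distrib, ih]
    simp [beq_iff_eq, Finset.sum_ite_eq]

lemma sum_biasCount_total {n : ℕ} (s : List (Fin n)) (i : Fin n) :
    (∑ j : Fin n, biasCount s i j) + (∑ j : Fin n, biasCount s j i) + s.count i
      = s.count i * s.length := by
  induction s with
  | nil => simp [biasCount]
  | cons a t ih =>
    simp only [biasCount, List.count_cons, List.length_cons]
    rw [Finset.sum_add_distrib, Finset.sum_add_distrib]
    have h1 : ∑ j : Fin n, (if a = i then t.count j else 0)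
        = if a = i then t.length else 0 := by
      split
      · exact sum_count t
      · simp
    have h2 : ∑ j : Fin n, (if a = j then t.count i else 0) = t.count i := by
      rw [Finset.sum_ite_eq]; simp
    rw [h1, h2]
    rcases eq_or_ne a i with h | h
    · simp only [h, if_pos rfl, beq_self_eq_true, if_true]
      have e : (List.count i t + 1) * (t.length + 1)
          = List.count i t * t.length + List.count i t + t.length + 1 := by ring
      rw [e]
      linarith [ih]
    · have hb : (a == i) = false := by simp [h]
      simp only [if_neg h, hb, Bool.false_eq_true, if_false, add_zero, zero_add]
      have e : List.count i t * (t.length + 1)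
          = List.count i t * t.length + List.count i t := by ring
      rw [e]
      linarith [ih]

lemma biasCount_zero_left {n : ℕ} (s : List (Fin n)) {i : Fin n} (j : Fin n)
    (h : s.count i = 0) : biasCount s i j = 0 := by
  induction s with
  | nil => rfl
  | cons a t ih =>
    simp only [List.count_cons, beq_iff_eq] at h
    have ha : a ≠ i := by intro e; simp [e] at h
    simp only [biasCount, if_neg ha, Nat.zero_add]
    exact ih (by omega)

lemma biasCount_zero_right {n : ℕ} (s : List (Fin n)) {i : Fin n} (j : Fin n)
    (h : s.count i = 0) : biasCount s j i = 0 := by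
  induction s with
  | nil => rfl
  | cons a t ih =>
    simp only [List.count_cons, beq_iff_eq] at h
    have ht : t.count i = 0 := by omega
    simp only [biasCount, ht, ite_self, Nat.zero_add]
    exact ih ht

end NeuralSeq

open NeuralSeq in
/-- `γ(s) = B_skew(s)ᵀ ρ(s)`. -/
theorem gamma_eq_Bskew_transpose_mulVec_rate {n : ℕ} (s : List (Fin n)) (hlen : 1 ≤ s.length) :
    ∀ i : Fin n, gamma s i = ∑ j : Fin n, skewBias s j i * rate s j := by
  intro i
  have hℓ : (s.length : ℝ) ≠ 0 := by positivity
  by_cases hi : 0 < s.count i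
  · have hc : (s.count i : ℝ) ≠ 0 := by positivity
    have hterm : ∀ j : Fin n, skewBias s j i * rate s j
        = ((biasCount s j i : ℝ) - (biasCount s i j : ℝ))
          / ((s.count i : ℝ) * (s.length : ℝ)) := by
      intro j
      by_cases hj : 0 < s.count j
      · have hcj : (s.count j : ℝ) ≠ 0 := by positivity
        unfold skewBias rate
        rw [if_pos ⟨hj, hi⟩]
        field_simp
      · have hj0 : s.count j = 0 := by omega
        have b1 := biasCount_zero_left s (i := j) i hj0
        have b2 := biasCount_zero_right s (i := j) i hj0
        unfold skewBias
        rw [if_neg (by simp [hj0])]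
        simp [b1, b2]
    rw [Finset.sum_congr rfl fun j _ => hterm j]
    rw [← Finset.sum_div]
    have hB : (∑ j : Fin n, ((biasCount s j i : ℝ) - (biasCount s i j : ℝ)))
        = (posSum s i : ℝ) - ((s.count i : ℝ) * (s.length : ℝ) - (s.count i : ℝ)
            - (posSum s i : ℝ)) := by
      rw [Finset.sum_sub_distrib]
      have h1 : (∑ j : Fin n, (biasCount s j i : ℝ)) = (posSum s i : ℝ) := by
        rw [← Nat.cast_sum, sum_biasCount_left]
      have h2' : (∑ j : Fin n, (biasCount s i j : ℝ)) + (∑ j : Fin n, (biasCount s j i : ℝ))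
          + (s.count i : ℝ) = (s.count i : ℝ) * (s.length : ℝ) := by
        exact_mod_cast congrArg (Nat.cast : ℕ → ℝ) (sum_biasCount_total s i)
      rw [h1] at h2' ⊢
      linarith
    rw [hB]
    have hcom : (∑ k : Fin s.length, if s.get k = i then ((k : ℕ) + 1 : ℝ) else 0)
        = (posSum s i : ℝ) + (s.count i : ℝ) := by
      have : ∀ k : Fin s.length, (if s.get k = i then ((k : ℕ) + 1 : ℝ) else 0)
          = (if s.get k = i then ((k : ℕ) : ℝ) else 0)
            + (if s.get k = i then (1 : ℝ) else 0) := by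
        intro k; split <;> simp
      rw [Finset.sum_congr rfl fun k _ => this k, Finset.sum_add_distrib]
      have e1 : (∑ k : Fin s.length, if s.get k = i then ((k : ℕ) : ℝ) else 0)
          = (posSum s i : ℝ) := by
        rw [posSum, Nat.cast_sum]
        exact Finset.sum_congr rfl fun k _ => by split <;> simp
      have e2 : (∑ k : Fin s.length, if s.get k = i then (1 : ℝ) else 0)
          = (s.count i : ℝ) := by
        rw [count_eq_sum, Nat.cast_sum]
        exact Finset.sum_congr rfl fun k _ => by split <;> simp
      rw [e1, e2]
    unfold gamma com
    rw [if_pos hi, hcom]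
    field_simp
    ring
  · have hi0 : s.count i = 0 := by omega
    have hterm : ∀ j : Fin n, skewBias s j i * rate s j = 0 := by
      intro j
      unfold skewBias
      rw [if_neg (by simp [hi0])]
      simp
    rw [Finset.sum_congr rfl fun j _ => hterm j]
    unfold gamma com
    rw [if_neg hi]
    field_simp
    simp
end

section
/- For any sequence s and any three distinct neurons i, j, k ∈ supp(s), the inequalities 0 ≤ b_{ij}(s) + b_{jk}(s) - b_{ik}(s) ≤ 1 hold (equivalently, 1 ≤ b_{ij}(s) + b_{jk}(s) + b_{ki}(s) ≤ 2). -/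
open Finset

open NeuralSeq

private lemma biasCount_le {n : ℕ} (s : List (Fin n)) (i j : Fin n) :
    biasCount s i j ≤ s.count i * s.count j := by
  induction s with
  | nil => simp [biasCount]
  | cons a t ih =>
    simp only [biasCount, List.count_cons, beq_iff_eq]
    by_cases hai : a = i <;> by_cases haj : a = j <;> simp [hai, haj] <;> (try split_ifs) <;> nlinarith [ih]

private lemma key {n : ℕ} (i j k : Fin n) (hij : i ≠ j) (hjk : j ≠ k) (hik : i ≠ k)
    (s : List (Fin n)) :
    0 ≤ (biasCount s i j * s.count k + biasCount s j k * s.count i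
          - biasCount s i k * s.count j : ℤ) ∧
    (biasCount s i j * s.count k + biasCount s j k * s.count i
          - biasCount s i k * s.count j : ℤ) ≤ s.count i * s.count j * s.count k := by
  induction s with
  | nil => simp [biasCount]
  | cons a t ih =>
    obtain ⟨ih1, ih2⟩ := ih
    have h1 : (biasCount t j k : ℤ) ≤ t.count j * t.count k := by
      exact_mod_cast biasCount_le t j k
    have h2 : (biasCount t i k : ℤ) ≤ t.count i * t.count k := by
      exact_mod_cast biasCount_le t i k
    have h3 : (biasCount t i j : ℤ) ≤ t.count i * t.count j := by
      exact_mod_cast biasCount_le t i j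
    simp only [biasCount, List.count_cons, beq_iff_eq]
    by_cases hai : a = i <;> by_cases haj : a = j <;> by_cases hak : a = k <;>
      simp [hai, haj, hak, hij, hjk, hik, Ne.symm hij, Ne.symm hjk, Ne.symm hik] <;>
      push_cast <;> constructor <;> nlinarith

open NeuralSeq in
/-- for distinct active neurons, `0 ≤ b_ij + b_jk - b_ik ≤ 1`. -/
theorem probBias_triple_ineq {n : ℕ} (s : List (Fin n)) (i j k : Fin n)
    (hij : i ≠ j) (hjk : j ≠ k) (hik : i ≠ k)
    (hi : 0 < s.count i) (hj : 0 < s.count j) (hk : 0 < s.count k) :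
    0 ≤ probBias s i j + probBias s j k - probBias s i k ∧
      probBias s i j + probBias s j k - probBias s i k ≤ 1 := by
  have hkey := key i j k hij hjk hik s
  have hci : (0:ℝ) < (s.count i : ℝ) := by exact_mod_cast hi
  have hcj : (0:ℝ) < (s.count j : ℝ) := by exact_mod_cast hj
  have hck : (0:ℝ) < (s.count k : ℝ) := by exact_mod_cast hk
  have heq : probBias s i j + probBias s j k - probBias s i k =
      ((biasCount s i j : ℝ) * s.count k + (biasCount s j k : ℝ) * s.count i
        - (biasCount s i k : ℝ) * s.count j) /
      ((s.count i : ℝ) * s.count j * s.count k) := by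
    unfold probBias; field_simp
  have h1' : (0:ℝ) ≤ (biasCount s i j : ℝ) * s.count k + (biasCount s j k : ℝ) * s.count i
      - (biasCount s i k : ℝ) * s.count j := by exact_mod_cast hkey.1
  have h2' : (biasCount s i j : ℝ) * s.count k + (biasCount s j k : ℝ) * s.count i
      - (biasCount s i k : ℝ) * s.count j ≤ (s.count i : ℝ) * s.count j * s.count k := by
    exact_mod_cast hkey.2
  constructor
  · rw [heq]; exact div_nonneg h1' (by positivity)
  · rw [heq]; rw [div_le_one (by positivity)]; exact h2'
end

section
/- For any sequence s and any three distinct neurons i, j, k ∈ supp(s), the inequalities -1 ≤ β_{ij}(s) + β_{jk}(s) - β_{ik}(s) ≤ 1 hold. -/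
open Finset

section AuxLemmas

open NeuralSeq

variable {n : ℕ}

lemma biasCount_le_mul (s : List (Fin n)) (i j : Fin n) :
    biasCount s i j ≤ s.count i * s.count j := by
  induction s with
  | nil => simp [biasCount]
  | cons a t ih =>
    simp only [biasCount, List.count_cons, beq_iff_eq]
    by_cases hai : a = i <;> by_cases haj : a = j <;>
      simp only [hai, haj, if_true, if_false, if_pos rfl] <;>
      first
      | (split_ifs <;> nlinarith [ih])
      | nlinarith [ih]

lemma biasCount_add_comm (s : List (Fin n)) {i j : Fin n} (hij : i ≠ j) :
    biasCount s i j + biasCount s j i = s.count i * s.count j := by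
  induction s with
  | nil => simp [biasCount]
  | cons a t ih =>
    simp only [biasCount, List.count_cons, beq_iff_eq]
    by_cases hai : a = i <;> by_cases haj : a = j <;>
      first
      | (exfalso; exact hij (hai.symm.trans haj))
      | (simp only [hai, haj, if_true, if_false, if_pos rfl, if_neg hij,
          if_neg (Ne.symm hij)] <;> nlinarith [ih])

lemma biasCount_triangle (s : List (Fin n)) {i j k : Fin n}
    (hij : i ≠ j) (hjk : j ≠ k) (hik : i ≠ k) :
    s.count j * biasCount s i k ≤ s.count k * biasCount s i j + s.count i * biasCount s j k := by
  induction s with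
  | nil => simp [biasCount]
  | cons a t ih =>
    simp only [biasCount, List.count_cons, beq_iff_eq]
    by_cases hai : a = i <;> by_cases haj : a = j <;> by_cases hak : a = k <;>
      first
      | (exfalso; exact hij (hai.symm.trans haj))
      | (exfalso; exact hjk (haj.symm.trans hak))
      | (exfalso; exact hik (hai.symm.trans hak))
      | (simp only [hai, haj, hak, if_true, if_false, if_pos rfl, if_neg hij,
          if_neg (Ne.symm hij), if_neg hjk, if_neg (Ne.symm hjk), if_neg hik,
          if_neg (Ne.symm hik)] <;>
        nlinarith [ih, biasCount_le_mul t i k])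

end AuxLemmas

open NeuralSeq in
/-- for distinct active neurons, `-1 ≤ β_ij + β_jk - β_ik ≤ 1`. -/
theorem skewBias_triple_ineq {n : ℕ} (s : List (Fin n)) (i j k : Fin n)
    (hij : i ≠ j) (hjk : j ≠ k) (hik : i ≠ k)
    (hi : 0 < s.count i) (hj : 0 < s.count j) (hk : 0 < s.count k) :
    -1 ≤ skewBias s i j + skewBias s j k - skewBias s i k ∧
      skewBias s i j + skewBias s j k - skewBias s i k ≤ 1 := by
  have hA : (0:ℝ) < (s.count i : ℝ) := by exact_mod_cast hi
  have hB : (0:ℝ) < (s.count j : ℝ) := by exact_mod_cast hj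
  have hC : (0:ℝ) < (s.count k : ℝ) := by exact_mod_cast hk
  have e1 : (biasCount s i j : ℝ) + (biasCount s j i : ℝ) = (s.count i : ℝ) * (s.count j : ℝ) := by
    exact_mod_cast biasCount_add_comm s hij
  have e2 : (biasCount s j k : ℝ) + (biasCount s k j : ℝ) = (s.count j : ℝ) * (s.count k : ℝ) := by
    exact_mod_cast biasCount_add_comm s hjk
  have e3 : (biasCount s i k : ℝ) + (biasCount s k i : ℝ) = (s.count i : ℝ) * (s.count k : ℝ) := by
    exact_mod_cast biasCount_add_comm s hik
  have t1 : (s.count j : ℝ) * (biasCount s i k : ℝ) ≤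
      (s.count k : ℝ) * (biasCount s i j : ℝ) + (s.count i : ℝ) * (biasCount s j k : ℝ) := by
    exact_mod_cast biasCount_triangle s hij hjk hik
  have t2 : (s.count j : ℝ) * (biasCount s k i : ℝ) ≤
      (s.count i : ℝ) * (biasCount s k j : ℝ) + (s.count k : ℝ) * (biasCount s j i : ℝ) := by
    exact_mod_cast biasCount_triangle s (Ne.symm hjk) (Ne.symm hij) (Ne.symm hik)
  set A := ((s.count i : ℕ) : ℝ) with hAdef
  set B := ((s.count j : ℕ) : ℝ) with hBdef
  set C := ((s.count k : ℕ) : ℝ) with hCdef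
  set bij := ((biasCount s i j : ℕ) : ℝ)
  set bjk := ((biasCount s j k : ℕ) : ℝ)
  set bik := ((biasCount s i k : ℕ) : ℝ)
  have hbji : ((biasCount s j i : ℕ) : ℝ) = A * B - bij := by linarith
  have hbkj : ((biasCount s k j : ℕ) : ℝ) = B * C - bjk := by linarith
  have hbki : ((biasCount s k i : ℕ) : ℝ) = A * C - bik := by linarith
  have hT1 : 0 ≤ C * bij + A * bjk - B * bik := by linarith
  have hT2 : C * bij + A * bjk - B * bik ≤ A * B * C := by
    rw [hbji, hbkj, hbki] at t2; nlinarith [t2]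
  rw [skewBias, skewBias, skewBias, if_pos ⟨hi, hj⟩, if_pos ⟨hj, hk⟩, if_pos ⟨hi, hk⟩,
    hbji, hbkj, hbki]
  have key : (bij - (A * B - bij)) / (A * B) + (bjk - (B * C - bjk)) / (B * C)
      - (bik - (A * C - bik)) / (A * C)
      = 2 * (C * bij + A * bjk - B * bik) / (A * B * C) - 1 := by
    field_simp
    ring
  rw [key]
  have h2 : 2 * (C * bij + A * bjk - B * bik) / (A * B * C) ≤ 2 := by
    rw [div_le_iff₀ (by positivity)]; linarith
  have h0 : 0 ≤ 2 * (C * bij + A * bjk - B * bik) / (A * B * C) :=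
    div_nonneg (by linarith) (by positivity)
  constructor <;> linarith
end

section
/- If s is a pure sequence on the neuron set N = {1,...,n} with supp(s) = N, then the bias network G(s) is a transitive tournament: for each pair of distinct neurons i, j exactly one of (i,j), (j,i) is an edge, and whenever (i,j) and (j,k) are edges, so is (i,k). -/
open Finset

namespace NeuralSeq

lemma biasCount_eq_zero_of_count {n : ℕ} (s : List (Fin n)) (k i : Fin n)
    (h : s.count i = 0) : biasCount s k i = 0 := by
  induction s with
  | nil => rfl
  | cons a t ih =>
    rw [List.count_cons] at h
    have ht : t.count i = 0 := by omega
    simp [biasCount, ht, ih ht]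

lemma biasCount_add {n : ℕ} (s : List (Fin n)) (i j : Fin n) (hij : i ≠ j) :
    biasCount s i j + biasCount s j i = s.count i * s.count j := by
  induction s with
  | nil => rfl
  | cons a t ih =>
    by_cases hai : a = i <;> by_cases haj : a = j <;>
      simp_all [biasCount, List.count_cons] <;> nlinarith [ih]

lemma biasCount_trans_zero {n : ℕ} (s : List (Fin n)) (i j k : Fin n)
    (h1 : biasCount s j i = 0) (h2 : biasCount s k j = 0)
    (hj : 0 < s.count j) : biasCount s k i = 0 := by
  induction s with
  | nil => rfl
  | cons a t ih =>
    simp only [biasCount] at h1 h2 ⊢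
    rw [List.count_cons] at hj
    by_cases hak : a = k
    · -- from h2, t.count j = 0
      have htj : t.count j = 0 := by
        simpa [hak] using (Nat.add_eq_zero.mp h2).1
      -- so a = j (since count positive)
      have haj : a = j := by
        by_contra haj
        exact absurd (by simp [haj, htj] at hj) (fun h => h)
      have hti : t.count i = 0 := by
        simpa [haj] using (Nat.add_eq_zero.mp h1).1
      simp [hak, hti, biasCount_eq_zero_of_count t k i hti]
    · simp only [if_neg hak, Nat.zero_add]
      by_cases htj : 0 < t.count j
      · exact ih (Nat.add_eq_zero.mp h1).2 (Nat.add_eq_zero.mp h2).2 htj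
      · have haj : a = j := by
          by_contra haj
          exact htj (by simpa [haj] using hj)
        have hti : t.count i = 0 := by
          simpa [haj] using (Nat.add_eq_zero.mp h1).1
        exact biasCount_eq_zero_of_count t k i hti

lemma skewBias_pos_iff {n : ℕ} (s : List (Fin n)) (i j : Fin n)
    (hi : 0 < s.count i) (hj : 0 < s.count j) :
    0 < skewBias s i j ↔ biasCount s j i < biasCount s i j := by
  have hd : (0:ℝ) < (s.count i : ℝ) * (s.count j : ℝ) := by
    have := Nat.cast_pos (α := ℝ) |>.mpr hi
    have := Nat.cast_pos (α := ℝ) |>.mpr hj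
    positivity
  rw [skewBias, if_pos ⟨hi, hj⟩, div_pos_iff_of_pos_right hd, sub_pos, Nat.cast_lt]

end NeuralSeq

open NeuralSeq in
/-- the bias network of a pure full-support sequence is a transitive tournament. -/
theorem pure_bias_network_transitive_tournament {n : ℕ} (s : List (Fin n))
    (hsupp : ∀ i : Fin n, 0 < s.count i) (hpure : IsPure s) :
    (∀ i j : Fin n, i ≠ j → Xor' (0 < skewBias s i j) (0 < skewBias s j i)) ∧
    (∀ i j k : Fin n, 0 < skewBias s i j → 0 < skewBias s j k → 0 < skewBias s i k) := by
  -- For distinct i j, purity + the sum identity pin down the bias counts.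
  have key : ∀ i j : Fin n, i ≠ j → 0 < skewBias s i j →
      biasCount s j i = 0 ∧ 0 < biasCount s i j := by
    intro i j hij hpos
    rw [skewBias_pos_iff s i j (hsupp i) (hsupp j)] at hpos
    rcases hpure i j hij (hsupp i) (hsupp j) with h | h
    · omega
    · exact ⟨h, by omega⟩
  have ne_of_pos : ∀ i j : Fin n, 0 < skewBias s i j → i ≠ j := by
    intro i j hpos h
    subst h
    rw [skewBias_pos_iff s i i (hsupp i) (hsupp i)] at hpos
    omega
  constructor
  · intro i j hij
    have hi := hsupp i
    have hj := hsupp j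
    have hsum : 0 < biasCount s i j + biasCount s j i := by
      rw [biasCount_add s i j hij]; exact Nat.mul_pos hi hj
    rw [show Xor' (0 < skewBias s i j) (0 < skewBias s j i) ↔ _ from xor_iff_iff_not, skewBias_pos_iff s i j hi hj, skewBias_pos_iff s j i hj hi]
    rcases hpure i j hij hi hj with h | h <;>
      (constructor
       · omega
       · intro h2; omega)
  · intro i j k hij hjk
    have hij' := ne_of_pos i j hij
    have hjk' := ne_of_pos j k hjk
    obtain ⟨hji0, hij1⟩ := key i j hij' hij
    obtain ⟨hkj0, hjk1⟩ := key j k hjk' hjk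
    have hik' : i ≠ k := by
      rintro rfl
      omega
    have hki0 : biasCount s k i = 0 := biasCount_trans_zero s i j k hji0 hkj0 (hsupp j)
    have hsum : 0 < biasCount s i k + biasCount s k i := by
      rw [biasCount_add s i k hik']; exact Nat.mul_pos (hsupp i) (hsupp k)
    rw [skewBias_pos_iff s i k (hsupp i) (hsupp k)]
    omega
end

section
/- Given any sequence s on the neuron set N = {1,...,n}, any sign value a ∈ {-1,1}, and any two distinct neurons i, j ∈ N, there exists a sequence s' on N such that sign(β_{ij}(s')) = a and sign(β_{qr}(s')) = sign(β_{qr}(s)) for all pairs of distinct neurons q, r with {q,r} ≠ {i,j}. -/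
open Finset

namespace NeuralSeq

lemma biasCount_append {n : ℕ} (u v : List (Fin n)) (i j : Fin n) :
    biasCount (u ++ v) i j = biasCount u i j + u.count i * v.count j + biasCount v i j := by
  induction u with
  | nil => simp [biasCount]
  | cons a t ih =>
    simp only [List.cons_append, biasCount, List.count_append, List.count_cons,
      List.append_eq, beq_iff_eq]
    by_cases h : a = i
    · simp only [h, if_true]; rw [ih]; ring
    · simp only [h, if_false]; rw [ih]; ring

lemma biasCount_replicate {n : ℕ} (m : ℕ) (x i j : Fin n) (h : i ≠ j) :
    biasCount (List.replicate m x) i j = 0 := by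
  induction m with
  | zero => rfl
  | succ m ih =>
    rw [List.replicate_succ]
    simp only [biasCount, ih, List.count_replicate, add_zero]
    by_cases hx : x = i
    · have : ¬ (j == x) = true := by simp [hx, Ne.symm h]
      simp only [hx, if_true, List.count_replicate, this, if_false]
      simp [h]
    · simp [hx]

lemma biasCount_eq_zero_left {n : ℕ} {s : List (Fin n)} {i : Fin n} (h : s.count i = 0)
    (j : Fin n) : biasCount s i j = 0 := by
  induction s with
  | nil => rfl
  | cons a t ih =>
    rw [List.count_cons] at h
    have h1 : t.count i = 0 := by omega
    have h2 : ¬ a = i := by intro hai; simp [hai] at h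
    simp [biasCount, h2, ih h1]

lemma biasCount_eq_zero_right {n : ℕ} {s : List (Fin n)} {j : Fin n} (h : s.count j = 0)
    (i : Fin n) : biasCount s i j = 0 := by
  induction s with
  | nil => rfl
  | cons a t ih =>
    rw [List.count_cons] at h
    have h1 : t.count j = 0 := by omega
    simp [biasCount, h1, ih h1]

lemma sign_div_of_pos (x d : ℝ) (hd : 0 < d) : Real.sign (x / d) = Real.sign x := by
  rcases lt_trichotomy x 0 with h | h | h
  · rw [Real.sign_of_neg h, Real.sign_of_neg (div_neg_of_neg_of_pos h hd)]
  · simp [h]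
  · rw [Real.sign_of_pos h, Real.sign_of_pos (div_pos h hd)]

lemma skewBias_antisymm {n : ℕ} (s : List (Fin n)) (i j : Fin n) :
    skewBias s i j = - skewBias s j i := by
  unfold skewBias
  by_cases h : 0 < s.count i ∧ 0 < s.count j
  · rw [if_pos h, if_pos ⟨h.2, h.1⟩]; ring
  · rw [if_neg h, if_neg (fun hc => h ⟨hc.2, hc.1⟩)]; ring

lemma core {n : ℕ} (s : List (Fin n)) (i j : Fin n) (hij : i ≠ j) :
    ∃ s' : List (Fin n),
      Real.sign (skewBias s' i j) = 1 ∧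
      ∀ q r : Fin n, q ≠ r → ({q, r} : Finset (Fin n)) ≠ {i, j} →
        Real.sign (skewBias s' q r) = Real.sign (skewBias s q r) := by
  set M := biasCount s i j + biasCount s j i + 1 with hM
  have hMpos : 0 < M := by omega
  set P : List (Fin n) := List.replicate M i ++ List.replicate M j with hP
  set s' : List (Fin n) := P ++ (s ++ P) with hs'
  have hcount : ∀ q : Fin n, s'.count q = s.count q + 2 * P.count q := by
    intro q; rw [hs']; simp only [List.count_append]; ring
  have hbp : ∀ q r : Fin n, q ≠ r →
      biasCount P q r = (if i = q then M else 0) * (if j = r then M else 0) := by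
    intro q r hqr
    rw [hP, biasCount_append, biasCount_replicate _ _ _ _ hqr,
      biasCount_replicate _ _ _ _ hqr, List.count_replicate, List.count_replicate]
    simp only [beq_iff_eq, zero_add, add_zero]
  have hbias : ∀ q r : Fin n, q ≠ r →
      biasCount s' q r = 2 * ((if i = q then M else 0) * (if j = r then M else 0)) +
        (P.count q * s.count r + s.count q * P.count r + P.count q * P.count r) +
        biasCount s q r := by
    intro q r hqr
    have hc2 : List.count r (s ++ P) = List.count r s + List.count r P :=
      List.count_append
    rw [hs', biasCount_append P (s ++ P), biasCount_append s P, hbp q r hqr, hc2]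
    ring
  have hnum : ∀ q r : Fin n, q ≠ r →
      (biasCount s' q r : ℤ) - biasCount s' r q =
        2 * ((if i = q then (M : ℤ) else 0) * (if j = r then (M : ℤ) else 0) -
             (if i = r then (M : ℤ) else 0) * (if j = q then (M : ℤ) else 0)) +
        ((biasCount s q r : ℤ) - biasCount s r q) := by
    intro q r hqr
    rw [hbias q r hqr, hbias r q hqr.symm]
    split_ifs <;> push_cast <;> ring
  refine ⟨s', ?_, ?_⟩
  · -- target sign
    have hPi : P.count i = M := by
      rw [hP]; simp [List.count_replicate, hij, Ne.symm hij]
    have hPj : P.count j = M := by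
      rw [hP]; simp [List.count_replicate, hij, Ne.symm hij]
    have hci : 0 < s'.count i := by rw [hcount, hPi]; omega
    have hcj : 0 < s'.count j := by rw [hcount, hPj]; omega
    have hNpos : 0 < (biasCount s' i j : ℤ) - biasCount s' j i := by
      rw [hnum i j hij]
      simp only [eq_self_iff_true, if_true, if_neg hij, if_neg (Ne.symm hij), mul_zero,
        zero_mul, sub_zero]
      have h1 : (1 : ℤ) ≤ (M : ℤ) := by exact_mod_cast hMpos
      have h2 : (M : ℤ) ≤ (M : ℤ) * M := by nlinarith
      have h3 : (biasCount s j i : ℤ) < M := by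
        have : biasCount s j i < M := by omega
        exact_mod_cast this
      have h4 : (0 : ℤ) ≤ (biasCount s i j : ℤ) := Int.natCast_nonneg _
      linarith
    have hNR : (0 : ℝ) < (biasCount s' i j : ℝ) - biasCount s' j i := by
      have := hNpos; exact_mod_cast this
    rw [skewBias, if_pos ⟨hci, hcj⟩]
    have hd : (0 : ℝ) < (s'.count i : ℝ) * (s'.count j : ℝ) :=
      mul_pos (by exact_mod_cast hci) (by exact_mod_cast hcj)
    exact Real.sign_of_pos (div_pos hNR hd)
  · -- preservation
    intro q r hqr hne
    have hz1 : ¬(i = q ∧ j = r) := by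
      rintro ⟨h1, h2⟩; apply hne; rw [h1, h2]
    have hz2 : ¬(i = r ∧ j = q) := by
      rintro ⟨h1, h2⟩; apply hne; rw [h1, h2]; exact Finset.pair_comm q r
    have hN : (biasCount s' q r : ℤ) - biasCount s' r q =
        (biasCount s q r : ℤ) - biasCount s r q := by
      rw [hnum q r hqr]
      have e1 : (if i = q then (M : ℤ) else 0) * (if j = r then (M : ℤ) else 0) = 0 := by
        split_ifs with h1 h2
        · exact (hz1 ⟨h1, h2⟩).elim
        all_goals simp
      have e2 : (if i = r then (M : ℤ) else 0) * (if j = q then (M : ℤ) else 0) = 0 := by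
        split_ifs with h1 h2
        · exact (hz2 ⟨h1, h2⟩).elim
        all_goals simp
      rw [e1, e2]; ring
    have hNR : (biasCount s' q r : ℝ) - biasCount s' r q =
        (biasCount s q r : ℝ) - biasCount s r q := by
      have := congrArg (fun z : ℤ => (z : ℝ)) hN
      push_cast at this; exact this
    by_cases hqr0 : 0 < s.count q ∧ 0 < s.count r
    · have hq' : 0 < s'.count q := by rw [hcount]; omega
      have hr' : 0 < s'.count r := by rw [hcount]; omega
      rw [skewBias, if_pos ⟨hq', hr'⟩, skewBias, if_pos hqr0, hNR,
        sign_div_of_pos _ _ (mul_pos (by exact_mod_cast hq' : (0:ℝ) < (s'.count q : ℝ))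
          (by exact_mod_cast hr')),
        sign_div_of_pos _ _ (mul_pos (by exact_mod_cast hqr0.1 : (0:ℝ) < (s.count q : ℝ))
          (by exact_mod_cast hqr0.2))]
    · have h0 : (biasCount s q r : ℝ) - biasCount s r q = 0 := by
        rcases not_and_or.mp hqr0 with h | h
        · have hq0 : s.count q = 0 := by omega
          rw [biasCount_eq_zero_left hq0, biasCount_eq_zero_right hq0]; simp
        · have hr0 : s.count r = 0 := by omega
          rw [biasCount_eq_zero_right hr0, biasCount_eq_zero_left hr0]; simp
      have h1 : skewBias s' q r = 0 := by
        rw [skewBias]; split_ifs with hc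
        · rw [hNR, h0, zero_div]
        · rfl
      have h2 : skewBias s q r = 0 := by rw [skewBias, if_neg hqr0]
      rw [h1, h2]

end NeuralSeq

open NeuralSeq in
/-- one entry of the sign matrix of the skew-bias matrix can be set to any
value in `{-1,1}` without changing any of the other off-diagonal signs. -/
theorem change_single_bias_sign {n : ℕ} (s : List (Fin n)) (a : ℝ) (ha : a = -1 ∨ a = 1)
    (i j : Fin n) (hij : i ≠ j) :
    ∃ s' : List (Fin n),
      Real.sign (skewBias s' i j) = a ∧
      ∀ q r : Fin n, q ≠ r → ({q, r} : Finset (Fin n)) ≠ {i, j} →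
        Real.sign (skewBias s' q r) = Real.sign (skewBias s q r) := by
  rcases ha with h | h
  · obtain ⟨s', h1, h2⟩ := NeuralSeq.core s j i hij.symm
    refine ⟨s', ?_, ?_⟩
    · rw [skewBias_antisymm s' i j, Real.sign_neg, h1, h]
    · intro q r hqr hne
      exact h2 q r hqr (fun hc => hne (hc.trans (Finset.pair_comm j i)))
  · obtain ⟨s', h1, h2⟩ := NeuralSeq.core s i j hij
    exact ⟨s', by rw [h, h1], h2⟩
end

section
/- If s is a sequence on the neuron set N = {1,...,n} and i ∈ supp(s), then com_i(s) = 1 + (1/c_i(s)) · Σ_{j=1}^n c_{ji}(s). -/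
open Finset

open Finset in
lemma count_eq_sum_ind {n : ℕ} (s : List (Fin n)) (i : Fin n) :
    s.count i = ∑ k : Fin s.length, if s.get k = i then 1 else 0 := by
  induction s with
  | nil => simp
  | cons a t ih =>
    have h : (∑ k : Fin (a :: t).length, if (a :: t).get k = i then 1 else 0)
        = (if a = i then 1 else 0)
          + ∑ k : Fin t.length, if t.get k = i then 1 else 0 :=
      Fin.sum_univ_succ (n := t.length)
        (f := fun k => if (a :: t).get k = i then 1 else 0)
    rw [h]
    simp [List.count_cons, ih, add_comm]

open Finset NeuralSeq in
lemma sum_bias_eq {n : ℕ} (s : List (Fin n)) (i : Fin n) :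
    (∑ j : Fin n, biasCount s j i) = ∑ k : Fin s.length, if s.get k = i then (k : ℕ) else 0 := by
  induction s with
  | nil => simp [biasCount]
  | cons a t ih =>
    have h1 : (∑ j : Fin n, biasCount (a :: t) j i)
        = t.count i + ∑ j : Fin n, biasCount t j i := by
      simp only [biasCount, Finset.sum_add_distrib]
      congr 1
      simp [Finset.sum_ite_eq]
    have h : (∑ k : Fin (a :: t).length, if (a :: t).get k = i then (k : ℕ) else 0)
        = (if a = i then 0 else 0)
          + ∑ k : Fin t.length, if t.get k = i then ((k : ℕ) + 1) else 0 :=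
      Fin.sum_univ_succ (n := t.length)
        (f := fun k => if (a :: t).get k = i then (k : ℕ) else 0)
    rw [h1, ih, h]
    have h2 : ∀ k : Fin t.length,
        (if t.get k = i then ((k : ℕ) + 1) else 0)
          = (if t.get k = i then (k : ℕ) else 0) + (if t.get k = i then 1 else 0) := by
      intro k; split <;> simp
    rw [Finset.sum_congr rfl (fun k _ => h2 k), Finset.sum_add_distrib,
      ← count_eq_sum_ind]
    simp [add_comm, add_left_comm]


open NeuralSeq in
/-- for an active neuron `i`, `com_i(s) = 1 + (1/c_i(s)) Σ_j c_{ji}(s)`. -/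

theorem com_from_biasCounts {n : ℕ} (s : List (Fin n)) (i : Fin n) (hi : 0 < s.count i) :
    com s i = 1 + (1 / (s.count i : ℝ)) * ∑ j : Fin n, (biasCount s j i : ℝ) := by
  rw [com, if_pos hi]
  have hc : (s.count i : ℝ) ≠ 0 := by positivity
  have h2 : ∀ k : Fin s.length,
      (if s.get k = i then ((k : ℕ) + 1 : ℝ) else 0)
        = (if s.get k = i then ((k : ℕ) : ℝ) else 0) + (if s.get k = i then 1 else 0) := by
    intro k; split <;> simp
  rw [Finset.sum_congr rfl (fun k _ => h2 k), Finset.sum_add_distrib]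
  have hb : (∑ k : Fin s.length, if s.get k = i then ((k : ℕ) : ℝ) else 0)
      = ∑ j : Fin n, (biasCount s j i : ℝ) := by
    rw [← Nat.cast_sum, sum_bias_eq]
    push_cast
    exact Finset.sum_congr rfl (fun k _ => by split <;> simp)
  have hcnt : (∑ k : Fin s.length, if s.get k = i then (1:ℝ) else 0) = (s.count i : ℝ) := by
    rw [count_eq_sum_ind s i]
    push_cast
    exact (Finset.sum_congr rfl (fun k _ => by split <;> simp)).symm
  rw [hb, hcnt]
  field_simp
  ring
end

section
/- Let s and s' be sequences on the neuron set N = {1,...,n} with supp(s) = supp(s') = N. Then C(s) = C(s') if and only if B_prob(s) = B_prob(s'); moreover, if C(s) = C(s') then B_skew(s) = B_skew(s'). -/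
open Finset

namespace NeuralSeq

lemma biasCount_diag {n : ℕ} (s : List (Fin n)) (i : Fin n) :
    biasCount s i i = (s.count i).choose 2 := by
  induction s with
  | nil => simp [biasCount]
  | cons a t ih =>
    rw [biasCount, ih, List.count_cons]
    by_cases h : a = i
    · simp [h, Nat.choose_succ_succ]
    · simp [h, Ne.symm h]

lemma choose2_inj {a b : ℕ} (ha : 0 < a) (hb : 0 < b) (h : a.choose 2 = b.choose 2) :
    a = b := by
  by_contra hne
  rcases Nat.lt_or_ge a b with hlt | hge
  · have h1 : (a + 1).choose 2 ≤ b.choose 2 := Nat.choose_le_choose 2 hlt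
    have : a + a.choose 2 ≤ b.choose 2 := by
      rwa [Nat.choose_succ_succ, Nat.choose_one_right] at h1
    omega
  · have hlt : b < a := lt_of_le_of_ne hge (Ne.symm hne)
    have h1 : (b + 1).choose 2 ≤ a.choose 2 := Nat.choose_le_choose 2 hlt
    have : b + b.choose 2 ≤ a.choose 2 := by
      rwa [Nat.choose_succ_succ, Nat.choose_one_right] at h1
    omega

lemma two_mul_choose_two (c : ℕ) : 2 * c.choose 2 = c * (c - 1) := by
  induction c with
  | zero => rfl
  | succ d ih =>
    rw [Nat.choose_succ_succ, Nat.choose_one_right, Nat.succ_sub_one, Nat.mul_add, ih]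
    cases d with
    | zero => rfl
    | succ e =>
      rw [Nat.succ_sub_one]
      ring

end NeuralSeq

open NeuralSeq in
/-- for full-support sequences, `C(s) = C(s')` iff `B_prob(s) = B_prob(s')`,
and either implies `B_skew(s) = B_skew(s')`. -/
theorem biasCount_eq_iff_probBias_eq {n : ℕ} (s s' : List (Fin n))
    (hs : ∀ i : Fin n, 0 < s.count i) (hs' : ∀ i : Fin n, 0 < s'.count i) :
    ((∀ i j : Fin n, biasCount s i j = biasCount s' i j) ↔
      (∀ i j : Fin n, probBias s i j = probBias s' i j)) ∧
    ((∀ i j : Fin n, biasCount s i j = biasCount s' i j) →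
      ∀ i j : Fin n, skewBias s i j = skewBias s' i j) := by
  have key : (∀ i j : Fin n, biasCount s i j = biasCount s' i j) →
      ∀ i : Fin n, s.count i = s'.count i := by
    intro h i
    exact choose2_inj (hs i) (hs' i)
      (by rw [← biasCount_diag, ← biasCount_diag, h])
  refine ⟨⟨?_, ?_⟩, ?_⟩
  · intro h i j
    unfold probBias
    rw [h, key h i, key h j]
  · intro h
    have hc : ∀ i : Fin n, s.count i = s'.count i := by
      intro i
      set x : ℝ := (s.count i : ℝ) with hxdef
      set y : ℝ := (s'.count i : ℝ) with hydef
      have hx0 : (0:ℝ) < x := by rw [hxdef]; exact_mod_cast hs i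
      have hy0 : (0:ℝ) < y := by rw [hydef]; exact_mod_cast hs' i
      have hii := h i i
      unfold probBias at hii
      rw [biasCount_diag, biasCount_diag] at hii
      have heq2 : ((s.count i).choose 2 : ℝ) * (y * y)
          = ((s'.count i).choose 2 : ℝ) * (x * x) := by
        rw [div_eq_div_iff (by positivity) (by positivity)] at hii
        exact hii
      have e1 : x * (x - 1) = 2 * ((s.count i).choose 2 : ℝ) := by
        have := two_mul_choose_two (s.count i)
        have hcast := congrArg (fun m : ℕ => (m : ℝ)) this
        push_cast [Nat.cast_sub (hs i)] at hcast
        rw [hxdef]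
        linarith
      have e2 : y * (y - 1) = 2 * ((s'.count i).choose 2 : ℝ) := by
        have := two_mul_choose_two (s'.count i)
        have hcast := congrArg (fun m : ℕ => (m : ℝ)) this
        push_cast [Nat.cast_sub (hs' i)] at hcast
        rw [hydef]
        linarith
      have heq : x * (x - 1) * (y * y) = y * (y - 1) * (x * x) := by
        linear_combination 2 * heq2 + (y * y) * e1 - (x * x) * e2
      have h4 : (x - 1) * y = (y - 1) * x := by
        have hxy : x * y ≠ 0 := by positivity
        apply mul_left_cancel₀ hxy
        linear_combination heq
      have hxy2 : x = y := by linear_combination h4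
      rw [hxdef, hydef] at hxy2
      exact_mod_cast hxy2
    intro i j
    have hij := h i j
    unfold probBias at hij
    rw [hc i, hc j] at hij
    have hD : ((s'.count i : ℝ) * (s'.count j : ℝ)) ≠ 0 := by
      have h1 : (0:ℝ) < (s'.count i : ℝ) := by exact_mod_cast hs' i
      have h2 : (0:ℝ) < (s'.count j : ℝ) := by exact_mod_cast hs' j
      positivity
    rw [div_eq_div_iff hD hD] at hij
    have := mul_right_cancel₀ hD hij
    exact_mod_cast this
  · intro h i j
    unfold skewBias
    rw [h, h, key h i, key h j]
end

section
/- Let s be a sequence on the neuron set N = {1,...,n}, let k ≥ 2, and let v = (v_1,...,v_{k-1}) be a list of k-1 distinct neurons with underlying set V. Let U be the set of all length-k lists of distinct neurons obtained from v by inserting some neuron w ∈ N \ V at one of the k possible positions (before v_1, between consecutive entries, or after v_{k-1}). Then c_v(s) · Σ_{w ∈ N \ V} c_w(s) = Σ_{u ∈ U} c_u(s). In particular, when Σ_{w ∈ N \ V} c_w(s) > 0, the order-(k-1) bias count c_v(s) is computable from the order-k bias counts and the spike counts. -/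
open Finset

namespace NeuralSeq

lemma orderCount_nil_ne {n : ℕ} (l : List (Fin n)) (h : l ≠ []) :
    orderCount ([] : List (Fin n)) l = 0 := by
  cases l with
  | nil => simp at h
  | cons x xs => rfl

lemma orderCount_singleton {n : ℕ} (s : List (Fin n)) (w : Fin n) :
    orderCount s [w] = s.count w := by
  induction s with
  | nil => rfl
  | cons a t ih =>
    by_cases h : a = w <;> simp [orderCount, ih, List.count_cons, h] <;> omega

lemma key {n : ℕ} (s : List (Fin n)) : ∀ (v : List (Fin n)) (w : Fin n), w ∉ v →
    ∑ m ∈ Finset.range (v.length + 1), orderCount s (v.insertIdx m w) =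
      orderCount s v * s.count w := by
  induction s with
  | nil =>
    intro v w hw
    rw [List.count_nil, Nat.mul_zero]
    apply Finset.sum_eq_zero
    intro m hm
    apply orderCount_nil_ne
    intro hcontra
    have := congrArg List.length hcontra
    rw [List.length_insertIdx, if_pos (by
      simpa using Nat.lt_succ_iff.mp (Finset.mem_range.mp hm))] at this
    simp at this
  | cons a t ih =>
    intro v w hw
    cases v with
    | nil =>
      simp only [List.length_nil, Nat.zero_add, Finset.sum_range_one, List.insertIdx_zero,
        orderCount_singleton, orderCount, Nat.one_mul]
    | cons x vs =>
      have hwx : w ≠ x := fun h => hw (h ▸ (List.mem_cons_self : x ∈ x :: vs))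
      have hwvs : w ∉ vs := fun h => hw (List.mem_cons_of_mem x h)
      have H1 := ih (x :: vs) w hw
      have H2 := ih vs w hwvs
      rw [Finset.sum_range_succ'] at H1 ⊢
      simp only [List.insertIdx_succ_cons, List.insertIdx_zero, List.length_cons] at H1 ⊢
      simp only [orderCount, Finset.sum_add_distrib, List.count_cons, beq_iff_eq]
      by_cases hax : a = x
      · by_cases haw : a = w
        · exact absurd (haw.symm.trans hax) hwx
        · subst hax
          simp only [if_neg haw, eq_self_iff_true, if_true, if_neg (Ne.symm hwx),
            Nat.add_zero, Nat.zero_add, add_zero, zero_add]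
          rw [H2, Nat.add_mul, ← H1]
          ring
      · by_cases haw : a = w
        · subst haw
          simp only [if_neg hax, if_neg hwx, eq_self_iff_true, if_true, Finset.sum_const_zero,
            Nat.add_zero, Nat.zero_add, add_zero, zero_add, Nat.mul_add, Nat.mul_one]
          rw [← H1]
          ring
        · simp only [if_neg hax, if_neg haw, Finset.sum_const_zero,
            Nat.add_zero, Nat.zero_add, add_zero, zero_add]
          exact H1

end NeuralSeq

open NeuralSeq in
/-- the order-`(k-1)` bias count `c_v(s)` times the total spike count of the
neurons outside `v` equals the sum of the order-`k` bias counts over all lists obtained by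
inserting one such neuron into `v` at one of the `k` possible positions. -/
theorem lower_order_bias_from_higher {n : ℕ} (s : List (Fin n))
    (v : List (Fin n)) (hv : v.Nodup) (hlen : 1 ≤ v.length) :
    orderCount s v * ∑ w ∈ Finset.univ \ v.toFinset, s.count w =
      ∑ w ∈ Finset.univ \ v.toFinset, ∑ m ∈ Finset.range (v.length + 1),
        orderCount s (v.insertIdx m w) := by
  rw [Finset.mul_sum]
  refine Finset.sum_congr rfl fun w hw => ?_
  have hwv : w ∉ v := fun h =>
    (Finset.mem_sdiff.mp hw).2 (List.mem_toFinset.mpr h)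
  exact (key s v w hwv).symm
end

section
/- Let s = (s_1,...,s_ℓ) be a sequence and let k_1, k_2 be indices with k_1 + 1 < k_2 and k_2 + 1 ≤ ℓ, such that s_{k_1} = s_{k_2+1} and s_{k_2} = s_{k_1+1}. Let π be the permutation of {1,...,ℓ} that swaps k_1 with k_1+1 and swaps k_2 with k_2+1, fixing all other indices. Then C(s) = C(s^π), i.e., c_{ij}(s) = c_{ij}(s^π) for all neurons i, j. -/
open Finset

open NeuralSeq in
private lemma biasCount_swap' {n : ℕ} (l₁ l₂ : List (Fin n)) (a b i j : Fin n) :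
    biasCount (l₁ ++ a :: b :: l₂) i j + (if b = i ∧ a = j then 1 else 0)
      = biasCount (l₁ ++ b :: a :: l₂) i j + (if a = i ∧ b = j then 1 else 0) := by
  induction l₁ with
  | nil =>
    simp only [List.nil_append, biasCount, List.count_cons]
    split_ifs <;> simp_all <;> omega
  | cons x t ih =>
    have hc : (t ++ a :: b :: l₂).count j = (t ++ b :: a :: l₂).count j := by
      simp [List.count_append, List.count_cons]; omega
    simp only [List.cons_append, biasCount, List.append_eq] at *
    rw [hc]
    omega

open NeuralSeq in
private lemma biasCount_double_swap' {n : ℕ} (T M R : List (Fin n)) (a b i j : Fin n) :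
    biasCount (T ++ a :: b :: (M ++ b :: a :: R)) i j
      = biasCount (T ++ b :: a :: (M ++ a :: b :: R)) i j := by
  have e1 := biasCount_swap' T (M ++ b :: a :: R) a b i j
  have e2 := biasCount_swap' (T ++ b :: a :: M) R b a i j
  simp only [List.append_assoc, List.cons_append, List.nil_append] at e1 e2 ⊢
  omega

private lemma getElem_five' {α : Type*} (s : List α) (k₁ k₂ : ℕ) (h₁ : k₁ + 1 < k₂)
    (h₂ : k₂ + 1 < s.length) (x y z w : α) (m : ℕ) (hmlen : m < s.length)
    (hm : m < (s.take k₁ ++ x :: y ::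
      ((s.drop (k₁+2)).take (k₂-(k₁+2)) ++ z :: w :: s.drop (k₂+2))).length) :
    (s.take k₁ ++ x :: y ::
        ((s.drop (k₁+2)).take (k₂-(k₁+2)) ++ z :: w :: s.drop (k₂+2)))[m]
      = if m = k₁ then x else if m = k₁+1 then y else
        if m = k₂ then z else if m = k₂+1 then w else s[m] := by
  have hT : (s.take k₁).length = k₁ := by simp; omega
  have hM : ((s.drop (k₁+2)).take (k₂-(k₁+2))).length = k₂ - (k₁+2) := by simp; omega
  by_cases e1 : m < k₁
  · rw [List.getElem_append_left (by omega), List.getElem_take,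
      if_neg (by omega), if_neg (by omega), if_neg (by omega), if_neg (by omega)]
  · rw [List.getElem_append_right (by omega)]
    by_cases e2 : m = k₁
    · simp only [show m - (s.take k₁).length = 0 from by omega]
      rw [List.getElem_cons_zero, if_pos e2]
    · by_cases e3 : m = k₁ + 1
      · simp only [show m - (s.take k₁).length = 1 from by omega]
        rw [show ((x :: y :: ((s.drop (k₁+2)).take (k₂-(k₁+2)) ++ z :: w :: s.drop (k₂+2)))[1]'(by simp)) = y from rfl]
        rw [if_neg e2, if_pos e3]
      · have e4 : m - (s.take k₁).length = (m - k₁ - 2) + 1 + 1 := by omega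
        simp only [e4]
        rw [List.getElem_cons_succ, List.getElem_cons_succ]
        by_cases e5 : m < k₂
        · rw [List.getElem_append_left (by omega), List.getElem_take, List.getElem_drop,
            if_neg e2, if_neg e3, if_neg (by omega), if_neg (by omega)]
          congr 1
          omega
        · rw [List.getElem_append_right (by omega)]
          by_cases e6 : m = k₂
          · simp only [show m - k₁ - 2 - ((s.drop (k₁+2)).take (k₂-(k₁+2))).length = 0 from by omega]
            rw [List.getElem_cons_zero, if_neg e2, if_neg e3, if_pos e6]
          · by_cases e7 : m = k₂ + 1
            · simp only [show m - k₁ - 2 - ((s.drop (k₁+2)).take (k₂-(k₁+2))).length = 1 from by omega]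
              rw [show ((z :: w :: s.drop (k₂+2))[1]'(by simp)) = w from rfl]
              rw [if_neg e2, if_neg e3, if_neg e6, if_pos e7]
            · simp only [show m - k₁ - 2 - ((s.drop (k₁+2)).take (k₂-(k₁+2))).length
                  = (m - k₂ - 2) + 1 + 1 from by omega]
              simp only [List.getElem_cons_succ, List.getElem_drop,
                if_neg e2, if_neg e3, if_neg e6, if_neg e7]
              congr 1
              omega


private lemma getElem_key {α : Type*} (s : List α) (k₁ k₂ m : ℕ) (h₁ : k₁ + 1 < k₂)
    (h₂ : k₂ + 1 < s.length) (hmlen : m < s.length)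
    (hba : s[k₂]'(by omega) = s[k₁+1]'(by omega))
    (hab : s[k₂+1]'(by omega) = s[k₁]'(by omega))
    (hidx : (if m = k₁ then k₁+1 else if m = k₁+1 then k₁ else
        if m = k₂ then k₂+1 else if m = k₂+1 then k₂ else m) < s.length)
    (hm : m < (s.take k₁ ++ (s[k₁+1]'(by omega)) :: (s[k₁]'(by omega)) ::
      ((s.drop (k₁+2)).take (k₂-(k₁+2)) ++ (s[k₁]'(by omega)) :: (s[k₁+1]'(by omega)) :: s.drop (k₂+2))).length) :
    s[(if m = k₁ then k₁+1 else if m = k₁+1 then k₁ else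
        if m = k₂ then k₂+1 else if m = k₂+1 then k₂ else m)]'hidx
      = (s.take k₁ ++ (s[k₁+1]'(by omega)) :: (s[k₁]'(by omega)) ::
        ((s.drop (k₁+2)).take (k₂-(k₁+2)) ++ (s[k₁]'(by omega)) :: (s[k₁+1]'(by omega)) :: s.drop (k₂+2)))[m]'hm := by
  rw [getElem_five' s k₁ k₂ h₁ h₂ _ _ _ _ m hmlen hm]
  by_cases e2 : m = k₁
  · simp only [if_pos e2]
  · by_cases e3 : m = k₁+1
    · simp only [if_neg e2, if_pos e3]
    · by_cases e6 : m = k₂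
      · simp only [if_neg e2, if_neg e3, if_pos e6]
        exact hab
      · by_cases e7 : m = k₂+1
        · simp only [if_neg e2, if_neg e3, if_neg e6, if_pos e7]
          exact hba
        · simp only [if_neg e2, if_neg e3, if_neg e6, if_neg e7]

open NeuralSeq in
/-- swapping the adjacent pairs at `k₁, k₁+1` and at `k₂, k₂+1`, where
`s_{k₁} = s_{k₂+1}` and `s_{k₂} = s_{k₁+1}`, leaves the bias-count matrix unchanged.
(Indices are 0-based here.) -/
theorem double_adjacent_swap_preserves_biasCounts {n : ℕ} (s : List (Fin n))
    (k₁ k₂ : ℕ) (h₁ : k₁ + 1 < k₂) (h₂ : k₂ + 1 < s.length)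
    (hs₁ : s.get ⟨k₁, by omega⟩ = s.get ⟨k₂ + 1, by omega⟩)
    (hs₂ : s.get ⟨k₂, by omega⟩ = s.get ⟨k₁ + 1, by omega⟩) :
    ∀ i j : Fin n,
      biasCount s i j =
        biasCount
          (shuffle s
            (Equiv.swap (⟨k₁, by omega⟩ : Fin s.length) ⟨k₁ + 1, by omega⟩ *
             Equiv.swap (⟨k₂, by omega⟩ : Fin s.length) ⟨k₂ + 1, by omega⟩)) i j := by
  intro i j
  have hk₁ : k₁ < s.length := by omega
  have hk₁' : k₁ + 1 < s.length := by omega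
  have hk₂ : k₂ < s.length := by omega
  have hba : s[k₂] = s[k₁+1] := by simpa [List.get_eq_getElem] using hs₂
  have hab : s[k₂+1] = s[k₁] := by simpa [List.get_eq_getElem] using hs₁.symm
  have d3 : s.drop (k₁+2) = (s.drop (k₁+2)).take (k₂ - (k₁+2)) ++ s.drop k₂ := by
    conv_lhs => rw [← List.take_append_drop (k₂ - (k₁+2)) (s.drop (k₁+2))]
    rw [List.drop_drop, show k₁ + 2 + (k₂ - (k₁+2)) = k₂ from by omega]
  have d4 : s.drop k₂ = s[k₁+1] :: s[k₁] :: s.drop (k₂+2) := by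
    rw [List.drop_eq_getElem_cons hk₂, List.drop_eq_getElem_cons h₂, hba, hab]
  have hsdecomp : s = s.take k₁ ++ s[k₁] :: s[k₁+1] ::
      ((s.drop (k₁+2)).take (k₂ - (k₁+2)) ++ s[k₁+1] :: s[k₁] :: s.drop (k₂+2)) := by
    conv_lhs => rw [← List.take_append_drop k₁ s,
      List.drop_eq_getElem_cons hk₁, List.drop_eq_getElem_cons hk₁', d3, d4]
  have hshuffle : shuffle s
      (Equiv.swap (⟨k₁, by omega⟩ : Fin s.length) ⟨k₁ + 1, by omega⟩ *
       Equiv.swap (⟨k₂, by omega⟩ : Fin s.length) ⟨k₂ + 1, by omega⟩)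
      = s.take k₁ ++ s[k₁+1] :: s[k₁] ::
        ((s.drop (k₁+2)).take (k₂ - (k₁+2)) ++ s[k₁] :: s[k₁+1] :: s.drop (k₂+2)) := by
    apply List.ext_getElem
    · simp [shuffle]; omega
    · intro m hm hm'
      have hmlen : m < s.length := by simpa [shuffle] using hm
      have hlhs : (shuffle s
          (Equiv.swap (⟨k₁, by omega⟩ : Fin s.length) ⟨k₁ + 1, by omega⟩ *
           Equiv.swap (⟨k₂, by omega⟩ : Fin s.length) ⟨k₂ + 1, by omega⟩))[m]
          = s.get ((Equiv.swap (⟨k₁, by omega⟩ : Fin s.length) ⟨k₁ + 1, by omega⟩ *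
           Equiv.swap (⟨k₂, by omega⟩ : Fin s.length) ⟨k₂ + 1, by omega⟩) ⟨m, hmlen⟩) := by
        simp [shuffle]
      rw [hlhs]
      have hπ : ((Equiv.swap (⟨k₁, by omega⟩ : Fin s.length) ⟨k₁ + 1, by omega⟩ *
           Equiv.swap (⟨k₂, by omega⟩ : Fin s.length) ⟨k₂ + 1, by omega⟩) ⟨m, hmlen⟩)
          = ⟨if m = k₁ then k₁+1 else if m = k₁+1 then k₁ else
              if m = k₂ then k₂+1 else if m = k₂+1 then k₂ else m,
             by split_ifs <;> omega⟩ := by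
        refine Fin.ext ?_
        simp only [Equiv.Perm.mul_apply, Equiv.swap_apply_def, Fin.mk.injEq,
          apply_ite (Fin.val), Fin.ext_iff]
        split_ifs <;> omega
      rw [hπ, List.get_eq_getElem]
      exact getElem_key s k₁ k₂ m h₁ h₂ hmlen hba hab (by split_ifs <;> omega) hm'
  rw [hshuffle]
  conv_lhs => rw [hsdecomp]
  exact biasCount_double_swap' _ _ _ _ _ i j
end

section
/- Let s = (s_1,...,s_ℓ) be a sequence, and let k_1 < k_2 < ... < k_m be indices with k_{a+1} > k_a + 1 for all a ∈ {1,...,m-1} and k_m + 1 ≤ ℓ. Let π be the permutation of {1,...,ℓ} that swaps k_a with k_a + 1 for each a ∈ {1,...,m} and fixes all other indices. If the neurons s_{k_1},...,s_{k_m} are pairwise distinct and {s_{k_1},...,s_{k_m}} = {s_{k_1+1},...,s_{k_m+1}} as sets, then com_i(s) = com_i(s^π) for every neuron i. -/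
open Finset

open Finset in
private lemma aux_sum_image {L m n : ℕ} (e : Fin m → Fin L) (g : Fin L → Fin n) (i : Fin n)
    (hge : Function.Injective (fun a => g (e a))) :
    (∑ k : Fin L, if g k = i ∧ ∃ a, e a = k then (1:ℝ) else 0) =
      if i ∈ Finset.univ.image (fun a => g (e a)) then 1 else 0 := by
  classical
  have he : Function.Injective e := fun a b h => hge (by simp [h])
  have h1 : (∑ k : Fin L, if g k = i ∧ ∃ a, e a = k then (1:ℝ) else 0)
      = ∑ a : Fin m, if g (e a) = i then (1:ℝ) else 0 := by
    rw [show (fun k : Fin L => if g k = i ∧ ∃ a, e a = k then (1:ℝ) else 0)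
        = fun k => if ∃ a, e a = k then (if g k = i then (1:ℝ) else 0) else 0 from
      funext fun k => by by_cases h1 : ∃ a, e a = k <;> by_cases h2 : g k = i <;> simp [h1, h2]]
    rw [← Finset.sum_filter]
    rw [show Finset.univ.filter (fun k : Fin L => ∃ a, e a = k) = Finset.univ.image e by
      ext k; simp]
    rw [Finset.sum_image (fun a _ b _ h => he h)]
  rw [h1]
  by_cases hi : ∃ a, g (e a) = i
  · obtain ⟨a0, ha0⟩ := hi
    rw [if_pos (Finset.mem_image.2 ⟨a0, Finset.mem_univ _, ha0⟩)]
    rw [Finset.sum_eq_single a0]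
    · simp [ha0]
    · intro b _ hb
      exact if_neg (fun h => hb (hge (show g (e b) = g (e a0) from h.trans ha0.symm)))
    · simp
  · rw [if_neg (by simpa using hi)]
    exact Finset.sum_eq_zero fun a _ => if_neg (fun h => hi ⟨a, h⟩)


open NeuralSeq in
/-- simultaneously swapping disjoint adjacent pairs at positions
`ks a, ks a + 1`, where the neurons `s_{ks a}` are pairwise distinct and
`{s_{ks a}} = {s_{ks a + 1}}` as sets, preserves every center of mass.
(Indices are 0-based here.) -/
theorem disjoint_adjacent_swaps_preserve_com {n : ℕ} (s : List (Fin n))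
    (m : ℕ) (ks : Fin m → ℕ)
    (hgap : ∀ a b : Fin m, a < b → ks a + 1 < ks b)
    (hbound : ∀ a : Fin m, ks a + 1 < s.length)
    (hinj : Function.Injective
      (fun a : Fin m => s.get ⟨ks a, Nat.lt_of_succ_lt (hbound a)⟩))
    (hsets : Finset.univ.image (fun a : Fin m => s.get ⟨ks a, Nat.lt_of_succ_lt (hbound a)⟩) =
      Finset.univ.image (fun a : Fin m => s.get ⟨ks a + 1, hbound a⟩))
    (π : Equiv.Perm (Fin s.length))
    (hπ : ∀ t : Fin s.length, (π t : ℕ) =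
      if ∃ a : Fin m, (t : ℕ) = ks a then (t : ℕ) + 1
      else if ∃ a : Fin m, (t : ℕ) = ks a + 1 then (t : ℕ) - 1
      else (t : ℕ)) :
    ∀ i : Fin n, com s i = com (shuffle s π) i := by
  classical
  intro i
  -- ks values are never of the form ks b + 1
  have hne : ∀ a b : Fin m, ks a ≠ ks b + 1 := by
    intro a b
    rcases lt_trichotomy a b with h | h | h
    · have := hgap a b h; omega
    · subst h; omega
    · have := hgap b a h; omega
  -- π is an involution
  have hinv : ∀ t : Fin s.length, π (π t) = t := by
    intro t
    apply Fin.ext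
    by_cases h1 : ∃ a : Fin m, (t : ℕ) = ks a
    · obtain ⟨a, ha⟩ := h1
      have hπt : (π t : ℕ) = (t : ℕ) + 1 := by rw [hπ t, if_pos ⟨a, ha⟩]
      rw [hπ (π t), if_neg, if_pos ⟨a, by omega⟩]
      · omega
      · rintro ⟨b, hb⟩
        exact hne b a (by omega)
    · by_cases h2 : ∃ a : Fin m, (t : ℕ) = ks a + 1
      · obtain ⟨a, ha⟩ := h2
        have hπt : (π t : ℕ) = ks a := by rw [hπ t, if_neg h1, if_pos ⟨a, ha⟩]; omega
        rw [hπ (π t), if_pos ⟨a, hπt⟩]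
        omega
      · have hπt : (π t : ℕ) = t := by rw [hπ t, if_neg h1, if_neg h2]
        rw [hπ (π t)]
        simp only [hπt]
        rw [if_neg h1, if_neg h2]
  -- basic facts about the shuffle
  have hlen : (shuffle s π).length = s.length := by simp [shuffle]
  have hperm : (shuffle s π).Perm s := by
    have h1 : ((List.finRange s.length).map π).Perm (List.finRange s.length) := by
      apply List.perm_of_nodup_nodup_toFinset_eq
      · exact (List.nodup_finRange _).map π.injective
      · exact List.nodup_finRange _
      · ext k
        simp only [List.mem_toFinset, List.mem_map, List.mem_finRange, true_and]
        exact ⟨fun _ => trivial, fun _ => ⟨π.symm k, by simp⟩⟩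
    have h2 : shuffle s π = List.map s.get ((List.finRange s.length).map π) := by
      rw [List.map_map]; rfl
    have h3 := h1.map s.get
    rw [List.map_get_finRange s] at h3
    rw [h2]
    exact h3
  have hcount : (shuffle s π).count i = s.count i := hperm.count_eq i
  -- the injective maps into positions
  set e₁ : Fin m → Fin s.length := fun a => ⟨ks a, Nat.lt_of_succ_lt (hbound a)⟩ with he₁
  set e₂ : Fin m → Fin s.length := fun a => ⟨ks a + 1, hbound a⟩ with he₂
  have hge₁ : Function.Injective (fun a => s.get (e₁ a)) := hinj
  have hge₂ : Function.Injective (fun a => s.get (e₂ a)) := by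
    have hc1 : (Finset.univ.image (fun a => s.get (e₁ a))).card = m := by
      rw [Finset.card_image_of_injective _ hge₁, Finset.card_univ, Fintype.card_fin]
    have hsets' : Finset.univ.image (fun a => s.get (e₁ a))
        = Finset.univ.image (fun a => s.get (e₂ a)) := hsets
    have hc2 : (Finset.univ.image (fun a => s.get (e₂ a))).card = (Finset.univ : Finset (Fin m)).card := by
      rw [← hsets', hc1, Finset.card_univ, Fintype.card_fin]
    have := Finset.card_image_iff.mp hc2
    rw [Finset.coe_univ] at this
    exact Set.injOn_univ.mp this
  -- the three sum rewrites
  have hsum1 : (∑ k : Fin (shuffle s π).length,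
        if (shuffle s π).get k = i then ((k : ℕ) + 1 : ℝ) else 0)
      = ∑ k : Fin s.length, if s.get (π k) = i then ((k : ℕ) + 1 : ℝ) else 0 := by
    apply Fintype.sum_equiv (finCongr hlen)
    intro k
    have hg : (shuffle s π).get k = s.get (π (finCongr hlen k)) := by
      rw [List.get_eq_getElem]
      simp only [shuffle, List.get_eq_getElem, List.getElem_map, List.getElem_finRange]
      rfl
    rw [hg]
    rfl
  have hsum2 : (∑ k : Fin s.length, if s.get (π k) = i then ((k : ℕ) + 1 : ℝ) else 0)
      = ∑ k : Fin s.length, if s.get k = i then ((π k : ℕ) + 1 : ℝ) else 0 := by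
    have h := Equiv.sum_comp π (fun k => if s.get k = i then ((π k : ℕ) + 1 : ℝ) else 0)
    rw [← h]
    apply Finset.sum_congr rfl
    intro k _
    rw [hinv k]
  have hsum3 : (∑ k : Fin s.length, if s.get k = i then ((π k : ℕ) + 1 : ℝ) else 0)
      = ∑ k : Fin s.length, if s.get k = i then ((k : ℕ) + 1 : ℝ) else 0 := by
    rw [← sub_eq_zero, ← Finset.sum_sub_distrib]
    have hterm : ∀ k : Fin s.length,
        ((if s.get k = i then ((π k : ℕ) + 1 : ℝ) else 0)
          - (if s.get k = i then ((k : ℕ) + 1 : ℝ) else 0))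
        = (if s.get k = i ∧ ∃ a, e₁ a = k then (1:ℝ) else 0)
          - (if s.get k = i ∧ ∃ a, e₂ a = k then (1:ℝ) else 0) := by
      intro k
      by_cases hs : s.get k = i
      · have hcond₁ : (∃ a, e₁ a = k) ↔ ∃ a : Fin m, (k : ℕ) = ks a := by
          constructor
          · rintro ⟨a, rfl⟩; exact ⟨a, rfl⟩
          · rintro ⟨a, ha⟩; exact ⟨a, Fin.ext ha.symm⟩
        have hcond₂ : (∃ a, e₂ a = k) ↔ ∃ a : Fin m, (k : ℕ) = ks a + 1 := by
          constructor
          · rintro ⟨a, rfl⟩; exact ⟨a, rfl⟩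
          · rintro ⟨a, ha⟩; exact ⟨a, Fin.ext ha.symm⟩
        by_cases h1 : ∃ a : Fin m, (k : ℕ) = ks a
        · have hπk : (π k : ℕ) = (k : ℕ) + 1 := by rw [hπ k, if_pos h1]
          have h2 : ¬ ∃ a : Fin m, (k : ℕ) = ks a + 1 := by
            rintro ⟨b, hb⟩
            obtain ⟨a, ha⟩ := h1
            exact hne a b (by omega)
          rw [if_pos hs, if_pos hs, if_pos ⟨hs, hcond₁.mpr h1⟩,
            if_neg (fun h => h2 (hcond₂.mp h.2)), hπk]
          push_cast
          ring
        · by_cases h2 : ∃ a : Fin m, (k : ℕ) = ks a + 1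
          · have hπk : (π k : ℕ) = (k : ℕ) - 1 := by rw [hπ k, if_neg h1, if_pos h2]
            obtain ⟨a, ha⟩ := h2
            have hπk' : (π k : ℕ) = ks a := by omega
            rw [if_pos hs, if_pos hs, if_neg (fun h => h1 (hcond₁.mp h.2)),
              if_pos ⟨hs, hcond₂.mpr ⟨a, ha⟩⟩, hπk', ha]
            push_cast
            ring
          · have hπk : (π k : ℕ) = (k : ℕ) := by rw [hπ k, if_neg h1, if_neg h2]
            rw [if_pos hs, if_pos hs, if_neg (fun h => h1 (hcond₁.mp h.2)),
              if_neg (fun h => h2 (hcond₂.mp h.2)), hπk]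
            ring
      · rw [if_neg hs, if_neg hs, if_neg (fun h => hs h.1), if_neg (fun h => hs h.1)]
    rw [Finset.sum_congr rfl (fun k _ => hterm k), Finset.sum_sub_distrib,
      aux_sum_image e₁ s.get i hge₁, aux_sum_image e₂ s.get i hge₂]
    have himg : Finset.univ.image (fun a => s.get (e₁ a))
        = Finset.univ.image (fun a => s.get (e₂ a)) := hsets
    rw [himg, sub_self]
  -- put everything together
  rw [com, com, hcount]
  by_cases hc : 0 < s.count i
  · rw [if_pos hc, if_pos hc, hsum1, hsum2, hsum3]
  · rw [if_neg hc, if_neg hc, hlen]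
end
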